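/- arXiv:0907.2726 — 3 statements merged into one kernel-verified Lean document; each statement's English description precedes it below -/
import Mathlib

section
/- Let M be a model category with a set I = {A_i → X_i} of cofibrations between objects such that each A_i is cofibrant and the trivial fibrations of M are exactly the maps with the right lifting property with respect to I. Let X be a fibrant object. If for every K ∈ {A_i, X_i}, the map Ho(M)(K, X) → Ho(M)(K, 1) induced by the unique map e : X → 1 to the terminal object is a bijection, then e : X → 1 is a weak equivalence. -/
open CategoryTheory CategoryTheory.Limits

universe u
section Model

variable (M : Type u) [Category.{u} M]

/-- A class of morphisms is closed under retracts (in the arrow category). -/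
def RetractClosed (P : MorphismProperty M) : Prop :=
  ∀ {X Y X' Y' : M} (f : X ⟶ Y) (g : X' ⟶ Y') (iX : X ⟶ X') (iY : Y ⟶ Y')
    (rX : X' ⟶ X) (rY : Y' ⟶ Y),
    iX ≫ rX = 𝟙 X → iY ≫ rY = 𝟙 Y → iX ≫ g = f ≫ iY → rX ≫ f = g ≫ rY →
    P g → P f

/-- A model structure: weak equivalences, cofibrations and fibrations satisfying
the axioms M2–M5 of a model category (M1 is imposed via `HasLimits`/`HasColimits`
instance assumptions on the underlying category). -/
structure ModelStruct where
  W : MorphismProperty M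
  Cof : MorphismProperty M
  Fib : MorphismProperty M
  W_id : ∀ X : M, W (𝟙 X)
  Cof_id : ∀ X : M, Cof (𝟙 X)
  Fib_id : ∀ X : M, Fib (𝟙 X)
  W_comp : ∀ {X Y Z : M} (f : X ⟶ Y) (g : Y ⟶ Z), W f → W g → W (f ≫ g)
  Cof_comp : ∀ {X Y Z : M} (f : X ⟶ Y) (g : Y ⟶ Z), Cof f → Cof g → Cof (f ≫ g)
  Fib_comp : ∀ {X Y Z : M} (f : X ⟶ Y) (g : Y ⟶ Z), Fib f → Fib g → Fib (f ≫ g)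
  two_of_three_left : ∀ {X Y Z : M} (f : X ⟶ Y) (g : Y ⟶ Z), W g → W (f ≫ g) → W f
  two_of_three_right : ∀ {X Y Z : M} (f : X ⟶ Y) (g : Y ⟶ Z), W f → W (f ≫ g) → W g
  W_retract : RetractClosed M W
  Cof_retract : RetractClosed M Cof
  Fib_retract : RetractClosed M Fib
  lift_cof_trivFib : ∀ {A B X Y : M} (i : A ⟶ B) (p : X ⟶ Y),
    Cof i → Fib p → W p → HasLiftingProperty i p
  lift_trivCof_fib : ∀ {A B X Y : M} (i : A ⟶ B) (p : X ⟶ Y),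
    Cof i → W i → Fib p → HasLiftingProperty i p
  fact_cof_trivFib : ∀ {X Y : M} (f : X ⟶ Y),
    ∃ (Z : M) (i : X ⟶ Z) (p : Z ⟶ Y), Cof i ∧ Fib p ∧ W p ∧ i ≫ p = f
  fact_trivCof_fib : ∀ {X Y : M} (f : X ⟶ Y),
    ∃ (Z : M) (i : X ⟶ Z) (p : Z ⟶ Y), Cof i ∧ W i ∧ Fib p ∧ i ≫ p = f

variable {M}

/-- An object is cofibrant if the map from the initial object is a cofibration. -/
def ModelStruct.Cofibrant [HasInitial M] (m : ModelStruct M) (X : M) : Prop :=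
  m.Cof (initial.to X)

/-- An object is fibrant if the map to the terminal object is a fibration. -/
def ModelStruct.Fibrant [HasTerminal M] (m : ModelStruct M) (X : M) : Prop :=
  m.Fib (terminal.from X)

end Model

set_option linter.unusedSectionVars false
set_option linter.unusedVariables false
set_option maxHeartbeats 1000000

attribute [local simp] prod.lift_fst prod.lift_snd coprod.inl_desc coprod.inr_desc prod.lift_fst_assoc prod.lift_snd_assoc coprod.inl_desc_assoc coprod.inr_desc_assoc pullback.lift_fst pullback.lift_snd pushout.inl_desc pushout.inr_desc


section Aux

variable {M : Type u} [Category.{u} M] (m : ModelStruct M)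

/-- Every retract-closed class containing identities contains all isomorphisms. -/
lemma aux_mem_of_isIso {P : MorphismProperty M} (hret : RetractClosed M P)
    (hid : ∀ X : M, P (𝟙 X)) {X Y : M} (f : X ⟶ Y) [IsIso f] : P f := by
  refine hret f (𝟙 X) (𝟙 X) (inv f) (𝟙 X) f ?_ ?_ ?_ ?_ (hid X) <;> simp

lemma aux_W_iso {X Y : M} (f : X ⟶ Y) [IsIso f] : m.W f :=
  aux_mem_of_isIso m.W_retract m.W_id f

lemma aux_Cof_iso {X Y : M} (f : X ⟶ Y) [IsIso f] : m.Cof f :=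
  aux_mem_of_isIso m.Cof_retract m.Cof_id f

lemma aux_Fib_iso {X Y : M} (f : X ⟶ Y) [IsIso f] : m.Fib f :=
  aux_mem_of_isIso m.Fib_retract m.Fib_id f

/-- Retract argument: RLP against all trivial cofibrations implies fibration. -/
lemma aux_fib_of_rlp {X Y : M} (p : X ⟶ Y)
    (h : ∀ {A B : M} (i : A ⟶ B), m.Cof i → m.W i → HasLiftingProperty i p) :
    m.Fib p := by
  obtain ⟨Z, j, q, hjc, hjw, hqf, hfac⟩ := m.fact_trivCof_fib p
  haveI := h j hjc hjw
  have sq : CommSq (𝟙 X) j p q := ⟨by rw [Category.id_comp, hfac]⟩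
  exact m.Fib_retract p q j (𝟙 Y) sq.lift (𝟙 Y) sq.fac_left (by simp)
    (by rw [hfac, Category.comp_id]) (by rw [sq.fac_right, Category.comp_id]) hqf

/-- Retract argument: LLP against all trivial fibrations implies cofibration. -/
lemma aux_cof_of_llp {A B : M} (i : A ⟶ B)
    (h : ∀ {X Y : M} (p : X ⟶ Y), m.Fib p → m.W p → HasLiftingProperty i p) :
    m.Cof i := by
  obtain ⟨Z, c, q, hcc, hqf, hqw, hfac⟩ := m.fact_cof_trivFib i
  haveI := h q hqf hqw
  have sq : CommSq c i q (𝟙 B) := ⟨by rw [hfac, Category.comp_id]⟩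
  exact m.Cof_retract i c (𝟙 A) sq.lift (𝟙 A) q (by simp) sq.fac_right
    (by rw [Category.id_comp, sq.fac_left]) (by rw [Category.id_comp, hfac])
    hcc

/-- Retract argument: LLP against all fibrations implies trivial cofibration. -/
lemma aux_trivCof_of_llp {A B : M} (i : A ⟶ B)
    (h : ∀ {X Y : M} (p : X ⟶ Y), m.Fib p → HasLiftingProperty i p) :
    m.Cof i ∧ m.W i := by
  obtain ⟨Z, c, q, hcc, hcw, hqf, hfac⟩ := m.fact_trivCof_fib i
  haveI := h q hqf
  have sq : CommSq c i q (𝟙 B) := ⟨by rw [hfac, Category.comp_id]⟩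
  constructor
  · exact m.Cof_retract i c (𝟙 A) sq.lift (𝟙 A) q (by simp) sq.fac_right
      (by rw [Category.id_comp, sq.fac_left]) (by rw [Category.id_comp, hfac]) hcc
  · exact m.W_retract i c (𝟙 A) sq.lift (𝟙 A) q (by simp) sq.fac_right
      (by rw [Category.id_comp, sq.fac_left]) (by rw [Category.id_comp, hfac]) hcw

/-- Retract argument: RLP against all cofibrations implies trivial fibration. -/
lemma aux_trivFib_of_rlp {X Y : M} (p : X ⟶ Y)
    (h : ∀ {A B : M} (i : A ⟶ B), m.Cof i → HasLiftingProperty i p) :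
    m.Fib p ∧ m.W p := by
  obtain ⟨Z, j, q, hjc, hqf, hqw, hfac⟩ := m.fact_cof_trivFib p
  haveI := h j hjc
  have sq : CommSq (𝟙 X) j p q := ⟨by rw [Category.id_comp, hfac]⟩
  constructor
  · exact m.Fib_retract p q j (𝟙 Y) sq.lift (𝟙 Y) sq.fac_left (by simp)
      (by rw [hfac, Category.comp_id]) (by rw [sq.fac_right, Category.comp_id]) hqf
  · exact m.W_retract p q j (𝟙 Y) sq.lift (𝟙 Y) sq.fac_left (by simp)
      (by rw [hfac, Category.comp_id]) (by rw [sq.fac_right, Category.comp_id]) hqw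

end Aux

section Aux2

variable {M : Type u} [Category.{u} M] (m : ModelStruct M)

section Coprod
variable [HasInitial M] [HasBinaryCoproducts M]

lemma aux_cof_inl {A B : M} (hB : m.Cofibrant B) :
    m.Cof (coprod.inl : A ⟶ A ⨿ B) := by
  refine aux_cof_of_llp m _ (fun {X Y} p hpf hpw => ⟨fun {t b} sq => ?_⟩)
  haveI := m.lift_cof_trivFib (initial.to B) p hB hpf hpw
  have sq2 : CommSq (initial.to X) (initial.to B) p (coprod.inr ≫ b) :=
    ⟨initial.hom_ext _ _⟩
  exact CommSq.HasLift.mk' ⟨coprod.desc t sq2.lift, by simp,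
    coprod.hom_ext (by rw [coprod.inl_desc_assoc, sq.w]) (by rw [coprod.inr_desc_assoc, sq2.fac_right])⟩

lemma aux_cof_inr {A B : M} (hA : m.Cofibrant A) :
    m.Cof (coprod.inr : B ⟶ A ⨿ B) := by
  refine aux_cof_of_llp m _ (fun {X Y} p hpf hpw => ⟨fun {t b} sq => ?_⟩)
  haveI := m.lift_cof_trivFib (initial.to A) p hA hpf hpw
  have sq2 : CommSq (initial.to X) (initial.to A) p (coprod.inl ≫ b) :=
    ⟨initial.hom_ext _ _⟩
  exact CommSq.HasLift.mk' ⟨coprod.desc sq2.lift t, by simp,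
    coprod.hom_ext (by rw [coprod.inl_desc_assoc, sq2.fac_right])
      (by rw [coprod.inr_desc_assoc, sq.w])⟩

end Coprod

section Prod
variable [HasTerminal M] [HasBinaryProducts M]

lemma aux_fib_fst {X Y : M} (hY : m.Fibrant Y) :
    m.Fib (prod.fst : X ⨯ Y ⟶ X) := by
  refine aux_fib_of_rlp m _ (fun {A B} i hic hiw => ⟨fun {t b} sq => ?_⟩)
  haveI := m.lift_trivCof_fib i (terminal.from Y) hic hiw hY
  have sq2 : CommSq (t ≫ prod.snd) i (terminal.from Y) (terminal.from B) :=
    ⟨terminal.hom_ext _ _⟩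
  exact CommSq.HasLift.mk' ⟨prod.lift b sq2.lift,
    prod.hom_ext (by rw [Category.assoc, prod.lift_fst, ← sq.w])
      (by rw [Category.assoc, prod.lift_snd, sq2.fac_left]),
    by simp⟩

lemma aux_fib_snd {X Y : M} (hX : m.Fibrant X) :
    m.Fib (prod.snd : X ⨯ Y ⟶ Y) := by
  refine aux_fib_of_rlp m _ (fun {A B} i hic hiw => ⟨fun {t b} sq => ?_⟩)
  haveI := m.lift_trivCof_fib i (terminal.from X) hic hiw hX
  have sq2 : CommSq (t ≫ prod.fst) i (terminal.from X) (terminal.from B) :=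
    ⟨terminal.hom_ext _ _⟩
  exact CommSq.HasLift.mk' ⟨prod.lift sq2.lift b,
    prod.hom_ext (by rw [Category.assoc, prod.lift_fst, sq2.fac_left])
      (by rw [Category.assoc, prod.lift_snd, ← sq.w]),
    by simp⟩

end Prod

section PullPush

lemma aux_hlp_pullback {A B X Y Z : M} (i : A ⟶ B) (g : X ⟶ Z) (q : Y ⟶ Z)
    [HasPullback g q] (h : HasLiftingProperty i q) :
    HasLiftingProperty i (pullback.fst g q) := by
  constructor
  intro t b sq
  haveI := h
  have sq2 : CommSq (t ≫ pullback.snd g q) i q (b ≫ g) :=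
    ⟨by rw [Category.assoc, ← pullback.condition, ← Category.assoc, ← Category.assoc, sq.w]⟩
  refine CommSq.HasLift.mk' ⟨pullback.lift b sq2.lift sq2.fac_right.symm, ?_, by simp⟩
  apply pullback.hom_ext
  · rw [Category.assoc, pullback.lift_fst, sq.w]
  · rw [Category.assoc, pullback.lift_snd, sq2.fac_left]

lemma aux_trivFib_pullback_fst {X Y Z : M} (g : X ⟶ Z) (q : Y ⟶ Z)
    [HasPullback g q] (hq : m.Fib q ∧ m.W q) :
    m.Fib (pullback.fst g q) ∧ m.W (pullback.fst g q) :=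
  aux_trivFib_of_rlp m _ (fun i hic =>
    aux_hlp_pullback i g q (m.lift_cof_trivFib i q hic hq.1 hq.2))

lemma aux_hlp_pushout {A B C X Y : M} (f : A ⟶ B) (j : A ⟶ C)
    [HasPushout f j] {p : X ⟶ Y} (h : HasLiftingProperty j p) :
    HasLiftingProperty (pushout.inl f j) p := by
  constructor
  intro t b sq
  haveI := h
  have sq2 : CommSq (f ≫ t) j p (pushout.inr f j ≫ b) :=
    ⟨by rw [Category.assoc, sq.w, ← Category.assoc, pushout.condition, Category.assoc]⟩
  refine CommSq.HasLift.mk' ⟨pushout.desc t sq2.lift sq2.fac_left.symm, by simp, ?_⟩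
  apply pushout.hom_ext
  · rw [pushout.inl_desc_assoc, sq.w]
  · rw [pushout.inr_desc_assoc, sq2.fac_right]

lemma aux_trivCof_pushout_inl {A B C : M} (f : A ⟶ B) (j : A ⟶ C)
    [HasPushout f j] (hj : m.Cof j ∧ m.W j) :
    m.Cof (pushout.inl f j) ∧ m.W (pushout.inl f j) :=
  aux_trivCof_of_llp m _ (fun p hpf =>
    aux_hlp_pushout f j (m.lift_trivCof_fib j p hj.1 hj.2 hpf))

end PullPush
end Aux2

section Htpy

variable {M : Type u} [Category.{u} M] [HasLimits M] [HasColimits M]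

/-- Left homotopy through a good cylinder object. -/
def ModelStruct.LH (m : ModelStruct M) {A X : M} (u v : A ⟶ X) : Prop :=
  ∃ (C : M) (i : A ⨿ A ⟶ C) (p : C ⟶ A) (H : C ⟶ X),
    m.Cof i ∧ m.W p ∧ i ≫ p = coprod.desc (𝟙 A) (𝟙 A) ∧
    coprod.inl ≫ i ≫ H = u ∧ coprod.inr ≫ i ≫ H = v

/-- Right homotopy through a good path object. -/
def ModelStruct.RH (m : ModelStruct M) {K X : M} (u v : K ⟶ X) : Prop :=
  ∃ (P : M) (s : X ⟶ P) (q₀ q₁ : P ⟶ X) (h : K ⟶ P),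
    m.Fib (prod.lift q₀ q₁) ∧ m.W s ∧ s ≫ q₀ = 𝟙 X ∧ s ≫ q₁ = 𝟙 X ∧
    h ≫ q₀ = u ∧ h ≫ q₁ = v

variable (m : ModelStruct M)

lemma aux_rh_refl {K X : M} (u : K ⟶ X) : m.RH u u := by
  obtain ⟨P, s, q, hsc, hsw, hqf, hfac⟩ := m.fact_trivCof_fib (prod.lift (𝟙 X) (𝟙 X))
  refine ⟨P, s, q ≫ prod.fst, q ≫ prod.snd, u ≫ s, ?_, hsw, ?_, ?_, ?_, ?_⟩
  · have : prod.lift (q ≫ prod.fst) (q ≫ prod.snd) = q := by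
      apply Limits.prod.hom_ext <;> simp
    rw [this]; exact hqf
  · rw [← Category.assoc, hfac, prod.lift_fst]
  · rw [← Category.assoc, hfac, prod.lift_snd]
  · rw [Category.assoc, ← Category.assoc s, hfac, prod.lift_fst, Category.comp_id]
  · rw [Category.assoc, ← Category.assoc s, hfac, prod.lift_snd, Category.comp_id]

lemma aux_rh_symm {K X : M} {u v : K ⟶ X} (h : m.RH u v) : m.RH v u := by
  obtain ⟨P, s, q₀, q₁, h, hf, hsw, h0, h1, e0, e1⟩ := h
  refine ⟨P, s, q₁, q₀, h, ?_, hsw, h1, h0, e1, e0⟩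
  have : prod.lift q₁ q₀ = prod.lift q₀ q₁ ≫ (prod.braiding X X).hom := by
    apply Limits.prod.hom_ext <;> simp [prod.braiding]
  rw [this]
  exact m.Fib_comp _ _ hf (aux_Fib_iso m _)

lemma aux_rh_precomp {K' K X : M} (a : K' ⟶ K) {u v : K ⟶ X} (h : m.RH u v) :
    m.RH (a ≫ u) (a ≫ v) := by
  obtain ⟨P, s, q₀, q₁, h, hf, hsw, h0, h1, e0, e1⟩ := h
  exact ⟨P, s, q₀, q₁, a ≫ h, hf, hsw, h0, h1,
    by rw [Category.assoc, e0], by rw [Category.assoc, e1]⟩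

lemma aux_fib_q0 {P X : M} (hX : m.Fibrant X) {q₀ q₁ : P ⟶ X}
    (hf : m.Fib (prod.lift q₀ q₁)) : m.Fib q₀ := by
  have : q₀ = prod.lift q₀ q₁ ≫ prod.fst := by rw [prod.lift_fst]
  rw [this]; exact m.Fib_comp _ _ hf (aux_fib_fst m hX)

lemma aux_fib_q1 {P X : M} (hX : m.Fibrant X) {q₀ q₁ : P ⟶ X}
    (hf : m.Fib (prod.lift q₀ q₁)) : m.Fib q₁ := by
  have : q₁ = prod.lift q₀ q₁ ≫ prod.snd := by rw [prod.lift_snd]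
  rw [this]; exact m.Fib_comp _ _ hf (aux_fib_snd m hX)

lemma aux_rh_trans {K X : M} (hX : m.Fibrant X) {u v w : K ⟶ X}
    (hu : m.RH u v) (hv : m.RH v w) : m.RH u w := by
  obtain ⟨P, s, q₀, q₁, h, hf, hsw, h0, h1, e0, e1⟩ := hu
  obtain ⟨P', s', q₀', q₁', h', hf', hsw', h0', h1', e0', e1'⟩ := hv
  -- auxiliary fibrations / weak equivalences
  have hq0 : m.Fib q₀ := aux_fib_q0 m hX hf
  have hq1' : m.Fib q₁' := aux_fib_q1 m hX hf'
  have hq0' : m.Fib q₀' := aux_fib_q0 m hX hf'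
  have hq0'w : m.W q₀' := m.two_of_three_right s' q₀' hsw' (by rw [h0']; exact m.W_id X)
  -- the pullback path object
  let PB := pullback q₁ q₀'
  let pr₁ : PB ⟶ P := pullback.fst q₁ q₀'
  let pr₂ : PB ⟶ P' := pullback.snd q₁ q₀'
  have hpr1 : m.Fib pr₁ ∧ m.W pr₁ := aux_trivFib_pullback_fst m q₁ q₀' ⟨hq0', hq0'w⟩
  have hs'' : s ≫ q₁ = s' ≫ q₀' := by rw [h1, h0']
  let s'' : X ⟶ PB := pullback.lift s s' hs''
  have hsw'' : m.W s'' := by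
    refine m.two_of_three_left s'' pr₁ hpr1.2 ?_
    have : s'' ≫ pr₁ = s := pullback.lift_fst _ _ _
    rw [this]; exact hsw
  have hhh : h ≫ q₁ = h' ≫ q₀' := by rw [e1, e0']
  let h'' : K ⟶ PB := pullback.lift h h' hhh
  -- the structure map of the new path object is a fibration
  let c : PB ⟶ P ⨯ X := prod.lift pr₁ (pr₂ ≫ q₁')
  have hc : m.Fib c := by
    refine aux_fib_of_rlp m _ (fun {A B} i hic hiw => ⟨fun {t b} sq => ?_⟩)
    haveI := m.lift_trivCof_fib i (prod.lift q₀' q₁') hic hiw hf'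
    have hw1 : t ≫ pr₁ = i ≫ b ≫ prod.fst := by
      have := sq.w =≫ prod.fst
      simpa [c] using this
    have hw2 : t ≫ pr₂ ≫ q₁' = i ≫ b ≫ prod.snd := by
      have := sq.w =≫ prod.snd
      simpa [c] using this
    have sq2 : CommSq (t ≫ pr₂) i (prod.lift q₀' q₁')
        (prod.lift (b ≫ prod.fst ≫ q₁) (b ≫ prod.snd)) := by
      constructor
      apply Limits.prod.hom_ext
      · simp only [Category.assoc, prod.lift_fst]
        rw [← pullback.condition, ← Category.assoc, hw1]
        simp [Category.assoc]
      · simp only [Category.assoc, prod.lift_snd]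
        exact hw2
    have hL2 : sq2.lift ≫ q₀' = b ≫ prod.fst ≫ q₁ := by
      have := sq2.fac_right =≫ prod.fst
      simpa using this
    have hL2' : sq2.lift ≫ q₁' = b ≫ prod.snd := by
      have := sq2.fac_right =≫ prod.snd
      simpa using this
    refine CommSq.HasLift.mk' ⟨pullback.lift (b ≫ prod.fst) sq2.lift
      (by rw [Category.assoc, hL2]), ?_, ?_⟩
    · apply pullback.hom_ext
      · rw [Category.assoc, pullback.lift_fst]
        exact hw1.symm
      · rw [Category.assoc, pullback.lift_snd, sq2.fac_left]
    · apply Limits.prod.hom_ext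
      · simp [c, pr₁]
      · simp only [c, pr₂, Category.assoc, prod.lift_snd, pullback.lift_snd_assoc]
        exact hL2'
  have hmap : m.Fib (prod.map q₀ (𝟙 X)) := by
    refine aux_fib_of_rlp m _ (fun {A B} i hic hiw => ⟨fun {t b} sq => ?_⟩)
    haveI := m.lift_trivCof_fib i q₀ hic hiw hq0
    have hw1 : t ≫ prod.fst ≫ q₀ = i ≫ b ≫ prod.fst := by
      have := sq.w =≫ prod.fst
      simpa using this
    have hw2 : t ≫ prod.snd = i ≫ b ≫ prod.snd := by
      have := sq.w =≫ prod.snd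
      simpa using this
    have sq2 : CommSq (t ≫ prod.fst) i q₀ (b ≫ prod.fst) :=
      ⟨by rw [Category.assoc]; exact hw1⟩
    refine CommSq.HasLift.mk' ⟨prod.lift sq2.lift (b ≫ prod.snd), ?_, ?_⟩
    · apply Limits.prod.hom_ext
      · rw [Category.assoc, prod.lift_fst, sq2.fac_left]
      · rw [Category.assoc, prod.lift_snd, ← hw2]
    · apply Limits.prod.hom_ext
      · rw [Category.assoc, prod.map_fst, ← Category.assoc, prod.lift_fst, sq2.fac_right]
      · rw [Category.assoc, prod.map_snd, ← Category.assoc, prod.lift_snd, Category.comp_id]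
  refine ⟨PB, s'', pr₁ ≫ q₀, pr₂ ≫ q₁', h'', ?_, hsw'', ?_, ?_, ?_, ?_⟩
  · have : prod.lift (pr₁ ≫ q₀) (pr₂ ≫ q₁') = c ≫ prod.map q₀ (𝟙 X) := by
      apply Limits.prod.hom_ext
      · simp [c]
      · simp [c]
    rw [this]
    exact m.Fib_comp _ _ hc hmap
  · rw [← Category.assoc]
    show (s'' ≫ pr₁) ≫ q₀ = 𝟙 X
    rw [pullback.lift_fst, h0]
  · rw [← Category.assoc]
    show (s'' ≫ pr₂) ≫ q₁' = 𝟙 X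
    rw [pullback.lift_snd, h1']
  · rw [← Category.assoc]
    show (h'' ≫ pr₁) ≫ q₀ = u
    rw [pullback.lift_fst, e0]
  · rw [← Category.assoc]
    show (h'' ≫ pr₂) ≫ q₁' = w
    rw [pullback.lift_snd, e1']

lemma aux_lh_postcomp {A X X' : M} (w : X ⟶ X') {u v : A ⟶ X} (h : m.LH u v) :
    m.LH (u ≫ w) (v ≫ w) := by
  obtain ⟨C, i, p, H, hic, hpw, hfac, e0, e1⟩ := h
  refine ⟨C, i, p, H ≫ w, hic, hpw, hfac, ?_, ?_⟩
  · simp only [← Category.assoc] at e0 ⊢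
    rw [e0]
  · simp only [← Category.assoc] at e1 ⊢
    rw [e1]

lemma aux_lh_symm {A X : M} {u v : A ⟶ X} (h : m.LH u v) : m.LH v u := by
  obtain ⟨C, i, p, H, hic, hpw, hfac, e0, e1⟩ := h
  have hb : IsIso (coprod.desc (coprod.inr : A ⟶ A ⨿ A) coprod.inl) :=
    ⟨coprod.desc coprod.inr coprod.inl, by aesop_cat, by aesop_cat⟩
  refine ⟨C, coprod.desc coprod.inr coprod.inl ≫ i, p, H,
    m.Cof_comp _ _ (@aux_Cof_iso _ _ m _ _ _ hb) hic, hpw, ?_, ?_, ?_⟩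
  · rw [Category.assoc, hfac]
    apply coprod.hom_ext <;> simp
  · simp only [Category.assoc]
    rw [coprod.inl_desc_assoc]
    simpa only [Category.assoc] using e1
  · simp only [Category.assoc]
    rw [coprod.inr_desc_assoc]
    simpa only [Category.assoc] using e0

/-- Any two lifts along a trivial fibration out of a cofibrant object are
left homotopic. -/
lemma aux_lifts_lh {A Z L : M} (hA : m.Cofibrant A) (pL : Z ⟶ L)
    (hpf : m.Fib pL) (hpw : m.W pL) (l l' : A ⟶ Z) (he : l ≫ pL = l' ≫ pL) :
    m.LH l l' := by
  obtain ⟨C, i, p, hic, hpf', hpw', hfac⟩ := m.fact_cof_trivFib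
    (coprod.desc (𝟙 A) (𝟙 A))
  haveI := m.lift_cof_trivFib i pL hic hpf hpw
  have h0 : (coprod.inl ≫ i) ≫ p = 𝟙 A := by
    rw [Category.assoc, hfac, coprod.inl_desc]
  have h1 : (coprod.inr ≫ i) ≫ p = 𝟙 A := by
    rw [Category.assoc, hfac, coprod.inr_desc]
  have sq : CommSq (coprod.desc l l') i pL (p ≫ l ≫ pL) := by
    constructor
    apply coprod.hom_ext
    · simp only [← Category.assoc]
      rw [coprod.inl_desc, h0, Category.id_comp]
    · simp only [← Category.assoc]
      rw [coprod.inr_desc, h1, Category.id_comp, he]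
  refine ⟨C, i, p, sq.lift, hic, hpw', hfac, ?_, ?_⟩
  · rw [sq.fac_left, coprod.inl_desc]
  · rw [sq.fac_left, coprod.inr_desc]

/-- Left homotopic maps out of a cofibrant object are right homotopic. -/
lemma aux_lh_to_rh {A X : M} (hA : m.Cofibrant A) {u v : A ⟶ X}
    (h : m.LH u v) : m.RH u v := by
  obtain ⟨C, i, p, H, hic, hpw, hfac, e0, e1⟩ := h
  obtain ⟨P, s, q, hsc, hsw, hqf, hfac2⟩ := m.fact_trivCof_fib (prod.lift (𝟙 X) (𝟙 X))
  have hi0c : m.Cof (coprod.inl ≫ i) := m.Cof_comp _ _ (aux_cof_inl m hA) hic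
  have hi0p : (coprod.inl ≫ i) ≫ p = 𝟙 A := by rw [Category.assoc, hfac, coprod.inl_desc]
  have hi0w : m.W (coprod.inl ≫ i) :=
    m.two_of_three_left _ p hpw (by rw [hi0p]; exact m.W_id A)
  haveI := m.lift_trivCof_fib (coprod.inl ≫ i) q hi0c hi0w hqf
  have sq : CommSq (u ≫ s) (coprod.inl ≫ i) q (prod.lift (p ≫ u) H) := by
    constructor
    apply Limits.prod.hom_ext
    · simp only [Category.assoc, prod.lift_fst]
      rw [← Category.assoc s, hfac2, prod.lift_fst, Category.comp_id,
        ← Category.assoc, ← Category.assoc, hi0p, Category.id_comp]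
    · simp only [Category.assoc, prod.lift_snd]
      rw [← Category.assoc s, hfac2, prod.lift_snd, Category.comp_id, e0]
  refine ⟨P, s, q ≫ prod.fst, q ≫ prod.snd, (coprod.inr ≫ i) ≫ sq.lift,
    ?_, hsw, ?_, ?_, ?_, ?_⟩
  · have : prod.lift (q ≫ prod.fst) (q ≫ prod.snd) = q := by
      apply Limits.prod.hom_ext <;> simp
    rw [this]; exact hqf
  · rw [← Category.assoc, hfac2, prod.lift_fst]
  · rw [← Category.assoc, hfac2, prod.lift_snd]
  · have hi1p : (coprod.inr ≫ i) ≫ p = 𝟙 A := by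
      rw [Category.assoc, hfac, coprod.inr_desc]
    simp only [Category.assoc]
    rw [← Category.assoc sq.lift, sq.fac_right, prod.lift_fst]
    simp only [← Category.assoc]
    rw [hi1p, Category.id_comp]
  · simp only [Category.assoc]
    rw [← Category.assoc sq.lift, sq.fac_right, prod.lift_snd]
    exact e1

/-- Right homotopic maps into a fibrant object are left homotopic. -/
lemma aux_rh_to_lh {K X : M} (hX : m.Fibrant X) {u v : K ⟶ X}
    (h : m.RH u v) : m.LH v u := by
  obtain ⟨P, s, q₀, q₁, h, hf, hsw, h0, h1, e0, e1⟩ := h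
  obtain ⟨C, i, p, hic, hpf, hpw, hfac⟩ := m.fact_cof_trivFib
    (coprod.desc (𝟙 K) (𝟙 K))
  have hq0 : m.Fib q₀ := aux_fib_q0 m hX hf
  have hq0w : m.W q₀ := m.two_of_three_right s q₀ hsw (by rw [h0]; exact m.W_id X)
  haveI := m.lift_cof_trivFib i q₀ hic hq0 hq0w
  have hK0 : (coprod.inl ≫ i) ≫ p = 𝟙 K := by rw [Category.assoc, hfac, coprod.inl_desc]
  have hK1 : (coprod.inr ≫ i) ≫ p = 𝟙 K := by rw [Category.assoc, hfac, coprod.inr_desc]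
  have sq : CommSq (coprod.desc h (u ≫ s)) i q₀ (p ≫ u) := by
    constructor
    apply coprod.hom_ext
    · rw [coprod.inl_desc_assoc, e0]
      simp only [← Category.assoc]
      rw [hK0, Category.id_comp]
    · rw [coprod.inr_desc_assoc, Category.assoc, h0, Category.comp_id]
      simp only [← Category.assoc]
      rw [hK1, Category.id_comp]
  refine ⟨C, i, p, sq.lift ≫ q₁, hic, hpw, hfac, ?_, ?_⟩
  · calc coprod.inl ≫ i ≫ sq.lift ≫ q₁
        = (coprod.inl ≫ (i ≫ sq.lift)) ≫ q₁ := by simp only [Category.assoc]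
      _ = h ≫ q₁ := by rw [sq.fac_left, coprod.inl_desc]
      _ = v := e1
  · calc coprod.inr ≫ i ≫ sq.lift ≫ q₁
        = (coprod.inr ≫ (i ≫ sq.lift)) ≫ q₁ := by simp only [Category.assoc]
      _ = (u ≫ s) ≫ q₁ := by rw [sq.fac_left, coprod.inr_desc]
      _ = u := by rw [Category.assoc, h1, Category.comp_id]

end Htpy

section Functoriality

variable {M : Type u} [Category.{u} M] [HasLimits M] [HasColimits M]
variable (m : ModelStruct M)

lemma aux_exists_rep (K : M) :
    ∃ (Z : M) (p : Z ⟶ K), m.Cofibrant Z ∧ m.Fib p ∧ m.W p := by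
  obtain ⟨Z, i, p, hic, hpf, hpw, _⟩ := m.fact_cof_trivFib (initial.to K)
  refine ⟨Z, p, ?_, hpf, hpw⟩
  have : initial.to Z = i := initial.hom_ext _ _
  rw [ModelStruct.Cofibrant, this]; exact hic

noncomputable def auxRep (K : M) : M := (aux_exists_rep m K).choose

noncomputable def auxRepP (K : M) : auxRep m K ⟶ K :=
  (aux_exists_rep m K).choose_spec.choose

lemma auxRep_cofibrant (K : M) : m.Cofibrant (auxRep m K) :=
  (aux_exists_rep m K).choose_spec.choose_spec.1

lemma auxRepP_fib (K : M) : m.Fib (auxRepP m K) :=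
  (aux_exists_rep m K).choose_spec.choose_spec.2.1

lemma auxRepP_w (K : M) : m.W (auxRepP m K) :=
  (aux_exists_rep m K).choose_spec.choose_spec.2.2

lemma aux_exists_liftMap {K L : M} (a : K ⟶ L) :
    ∃ la : auxRep m K ⟶ auxRep m L, la ≫ auxRepP m L = auxRepP m K ≫ a := by
  haveI := m.lift_cof_trivFib (initial.to (auxRep m K)) (auxRepP m L)
    (auxRep_cofibrant m K) (auxRepP_fib m L) (auxRepP_w m L)
  have sq : CommSq (initial.to (auxRep m L)) (initial.to (auxRep m K))
      (auxRepP m L) (auxRepP m K ≫ a) := ⟨initial.hom_ext _ _⟩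
  exact ⟨sq.lift, sq.fac_right⟩

noncomputable def auxLift {K L : M} (a : K ⟶ L) : auxRep m K ⟶ auxRep m L :=
  (aux_exists_liftMap m a).choose

lemma auxLift_p {K L : M} (a : K ⟶ L) :
    auxLift m a ≫ auxRepP m L = auxRepP m K ≫ a :=
  (aux_exists_liftMap m a).choose_spec

lemma aux_section {A : M} (hA : m.Cofibrant A) :
    ∃ sA : A ⟶ auxRep m A, sA ≫ auxRepP m A = 𝟙 A := by
  haveI := m.lift_cof_trivFib (initial.to A) (auxRepP m A) hA
    (auxRepP_fib m A) (auxRepP_w m A)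
  have sq : CommSq (initial.to (auxRep m A)) (initial.to A) (auxRepP m A) (𝟙 A) :=
    ⟨initial.hom_ext _ _⟩
  exact ⟨sq.lift, sq.fac_right⟩

lemma aux_rh_of_eq_p {K L X : M} {g g' : auxRep m K ⟶ auxRep m L}
    (hg : g ≫ auxRepP m L = g' ≫ auxRepP m L) (v : auxRep m L ⟶ X) :
    m.RH (g ≫ v) (g' ≫ v) :=
  aux_lh_to_rh m (auxRep_cofibrant m K)
    (aux_lh_postcomp m v (aux_lifts_lh m (auxRep_cofibrant m K) (auxRepP m L)
      (auxRepP_fib m L) (auxRepP_w m L) g g' hg))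

/-- Right-homotopy classes of maps `K ⟶ X`. -/
def HQuot (X K : M) : Type u := Quot (fun u v : K ⟶ X => m.RH u v)

/-- Precomposition on right-homotopy classes. -/
def auxPre (X : M) {A Z : M} (j : A ⟶ Z) : HQuot m X Z → HQuot m X A :=
  Quot.lift (fun v => Quot.mk _ (j ≫ v))
    (fun _ _ h => Quot.sound (aux_rh_precomp m j h))

/-- The homotopy-classes-of-maps-from-a-cofibrant-replacement functor. -/
noncomputable def auxF (X : M) : M ⥤ (Type u)ᵒᵖ where
  obj K := Opposite.op (HQuot m X (auxRep m K))
  map {K L} a := Quiver.Hom.op (TypeCat.ofHom (auxPre m X (auxLift m a)))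
  map_id K := by
    apply Quiver.Hom.unop_inj
    ext x
    obtain ⟨v, rfl⟩ := Quot.exists_rep x
    have h := aux_rh_of_eq_p m (g := auxLift m (𝟙 K)) (g' := 𝟙 (auxRep m K))
      (by rw [auxLift_p, Category.comp_id, Category.id_comp]) v
    rw [Category.id_comp] at h
    show Quot.mk (fun u v => m.RH u v) (auxLift m (𝟙 K) ≫ v) =
      Quot.mk (fun u v => m.RH u v) v
    exact Quot.sound h
  map_comp {K L N} a b := by
    apply Quiver.Hom.unop_inj
    ext x
    obtain ⟨v, rfl⟩ := Quot.exists_rep x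
    have h := aux_rh_of_eq_p m (g := auxLift m (a ≫ b))
      (g' := auxLift m a ≫ auxLift m b)
      (by rw [auxLift_p]
          simp only [Category.assoc]
          rw [auxLift_p]
          simp only [← Category.assoc]
          rw [auxLift_p]) v
    rw [Category.assoc] at h
    show Quot.mk (fun u v => m.RH u v) (auxLift m (a ≫ b) ≫ v) =
      Quot.mk (fun u v => m.RH u v) (auxLift m a ≫ auxLift m b ≫ v)
    exact Quot.sound h

lemma aux_rh_equivalence {K X : M} (hX : m.Fibrant X) :
    Equivalence (fun u v : K ⟶ X => m.RH u v) :=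
  ⟨fun u => aux_rh_refl m u, fun h => aux_rh_symm m h, fun h h' => aux_rh_trans m hX h h'⟩

lemma aux_hquot_exact {K X : M} (hX : m.Fibrant X) {u v : K ⟶ X}
    (h : (Quot.mk _ u : HQuot m X K) = Quot.mk _ v) : m.RH u v := by
  have := Quot.eqvGen_exact h
  rwa [(aux_rh_equivalence m hX).eqvGen_iff] at this

end Functoriality

section Bijectivity

variable {M : Type u} [Category.{u} M] [HasLimits M] [HasColimits M]
variable (m : ModelStruct M)

lemma aux_pre_bij_of_trivCof {X A Z : M} (hX : m.Fibrant X) (j : A ⟶ Z)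
    (hjc : m.Cof j) (hjw : m.W j) : Function.Bijective (auxPre m X j) := by
  constructor
  · intro x y hxy
    obtain ⟨v, rfl⟩ := Quot.exists_rep x
    obtain ⟨v', rfl⟩ := Quot.exists_rep y
    have hr : m.RH (j ≫ v) (j ≫ v') := aux_hquot_exact m hX hxy
    obtain ⟨P, s, q₀, q₁, h, hf, hsw, h0, h1, e0, e1⟩ := hr
    haveI := m.lift_trivCof_fib j (prod.lift q₀ q₁) hjc hjw hf
    have sq : CommSq h j (prod.lift q₀ q₁) (prod.lift v v') := by
      constructor
      apply Limits.prod.hom_ext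
      · simp only [Category.assoc, prod.lift_fst]
        rw [e0]
      · simp only [Category.assoc, prod.lift_snd]
        rw [e1]
    have hv : sq.lift ≫ q₀ = v := by
      have := sq.fac_right =≫ prod.fst
      simpa using this
    have hv' : sq.lift ≫ q₁ = v' := by
      have := sq.fac_right =≫ prod.snd
      simpa using this
    exact Quot.sound ⟨P, s, q₀, q₁, sq.lift, hf, hsw, h0, h1, hv, hv'⟩
  · intro x
    obtain ⟨u, rfl⟩ := Quot.exists_rep x
    haveI := m.lift_trivCof_fib j (terminal.from X) hjc hjw hX
    have sq : CommSq u j (terminal.from X) (terminal.from Z) := ⟨terminal.hom_ext _ _⟩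
    refine ⟨Quot.mk _ sq.lift, ?_⟩
    show Quot.mk (fun u v => m.RH u v) (j ≫ sq.lift) = Quot.mk _ u
    rw [sq.fac_left]

lemma aux_pre_bij_of_weq {X A B' : M} (hX : m.Fibrant X) (hA : m.Cofibrant A)
    (hB : m.Cofibrant B') (w : A ⟶ B') (hw : m.W w) :
    Function.Bijective (auxPre m X w) := by
  obtain ⟨Z, c, q, hcc, hqf, hqw, hfac⟩ := m.fact_cof_trivFib (coprod.desc w (𝟙 B'))
  have hjaq : (coprod.inl ≫ c) ≫ q = w := by rw [Category.assoc, hfac, coprod.inl_desc]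
  have hjbq : (coprod.inr ≫ c) ≫ q = 𝟙 B' := by rw [Category.assoc, hfac, coprod.inr_desc]
  have hjac : m.Cof (coprod.inl ≫ c) := m.Cof_comp _ _ (aux_cof_inl m hB) hcc
  have hjbc : m.Cof (coprod.inr ≫ c) := m.Cof_comp _ _ (aux_cof_inr m hA) hcc
  have hjaw : m.W (coprod.inl ≫ c) :=
    m.two_of_three_left _ q hqw (by rw [hjaq]; exact hw)
  have hjbw : m.W (coprod.inr ≫ c) :=
    m.two_of_three_left _ q hqw (by rw [hjbq]; exact m.W_id B')
  have bijA := aux_pre_bij_of_trivCof m hX (coprod.inl ≫ c) hjac hjaw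
  have bijB := aux_pre_bij_of_trivCof m hX (coprod.inr ≫ c) hjbc hjbw
  have key2 : ∀ z, auxPre m X (coprod.inr ≫ c) (auxPre m X q z) = z := by
    intro z
    obtain ⟨v, rfl⟩ := Quot.exists_rep z
    show Quot.mk (fun u v => m.RH u v) ((coprod.inr ≫ c) ≫ q ≫ v) = Quot.mk _ v
    rw [← Category.assoc, hjbq, Category.id_comp]
  have hq_bij : Function.Bijective (auxPre m X q) := by
    constructor
    · intro x y hxy
      have := congrArg (auxPre m X (coprod.inr ≫ c)) hxy
      rwa [key2, key2] at this
    · intro y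
      refine ⟨auxPre m X (coprod.inr ≫ c) y, ?_⟩
      apply bijB.1
      rw [key2]
  have keyw : ∀ z, auxPre m X w z = auxPre m X (coprod.inl ≫ c) (auxPre m X q z) := by
    intro z
    obtain ⟨v, rfl⟩ := Quot.exists_rep z
    show Quot.mk (fun u v => m.RH u v) (w ≫ v) =
      Quot.mk _ ((coprod.inl ≫ c) ≫ q ≫ v)
    rw [← Category.assoc, hjaq]
  have : auxPre m X w = (auxPre m X (coprod.inl ≫ c)) ∘ (auxPre m X q) := funext keyw
  rw [this]
  exact bijA.comp hq_bij

lemma aux_F_inverts {X : M} (hX : m.Fibrant X) : m.W.IsInvertedBy (auxF m X) := by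
  intro K L a ha
  have hlw : m.W (auxLift m a) := by
    refine m.two_of_three_left _ (auxRepP m L) (auxRepP_w m L) ?_
    rw [auxLift_p]
    exact m.W_comp _ _ (auxRepP_w m K) ha
  have hbij : Function.Bijective (auxPre m X (auxLift m a)) :=
    aux_pre_bij_of_weq m hX (auxRep_cofibrant m K) (auxRep_cofibrant m L)
      (auxLift m a) hlw
  have : IsIso (TypeCat.ofHom (auxPre m X (auxLift m a))) := (isIso_iff_bijective (TypeCat.ofHom _)).2 hbij
  show IsIso (Quiver.Hom.op (TypeCat.ofHom (auxPre m X (auxLift m a))))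
  infer_instance

end Bijectivity

section StrictLift

variable {M : Type u} [Category.{u} M] [HasLimits M] [HasColimits M]
variable (m : ModelStruct M)

/-- Homotopy lifting: if `u` is right homotopic to `f ≫ g` with `f` a
cofibration from a cofibrant object and `X` fibrant, then `u` extends
strictly along `f`. -/
lemma aux_strict_lift {A B X : M} (hX : m.Fibrant X) (hA : m.Cofibrant A)
    {f : A ⟶ B} (hf : m.Cof f) (u : A ⟶ X) (g : B ⟶ X)
    (hr : m.RH u (f ≫ g)) : ∃ l : B ⟶ X, f ≫ l = u := by
  have hlh : m.LH u (f ≫ g) := aux_lh_symm m (aux_rh_to_lh m hX hr)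
  obtain ⟨C, i, p, H, hic, hpw, hfac, e0, e1⟩ := hlh
  have hi0p : (coprod.inl ≫ i) ≫ p = 𝟙 A := by
    rw [Category.assoc, hfac, coprod.inl_desc]
  have hi1p : (coprod.inr ≫ i) ≫ p = 𝟙 A := by
    rw [Category.assoc, hfac, coprod.inr_desc]
  have hi1c : m.Cof (coprod.inr ≫ i) := m.Cof_comp _ _ (aux_cof_inr m hA) hic
  have hi1w : m.W (coprod.inr ≫ i) :=
    m.two_of_three_left _ p hpw (by rw [hi1p]; exact m.W_id A)
  -- pushout of the cylinder along `f`
  have hj := aux_trivCof_pushout_inl m f (coprod.inr ≫ i) ⟨hi1c, hi1w⟩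
  have hcond : f ≫ g = (coprod.inr ≫ i) ≫ H := by
    rw [Category.assoc]; exact e1.symm
  have hrcond : f ≫ 𝟙 B = (coprod.inr ≫ i) ≫ (p ≫ f) := by
    rw [← Category.assoc, hi1p, Category.id_comp, Category.comp_id]
  set P₀ := pushout f (coprod.inr ≫ i) with hP₀
  let h₀ : P₀ ⟶ X := pushout.desc g H hcond
  let r : P₀ ⟶ B := pushout.desc (𝟙 B) (p ≫ f) hrcond
  have hrw : m.W r := by
    refine m.two_of_three_right (pushout.inl f (coprod.inr ≫ i)) r hj.2 ?_
    have : pushout.inl f (coprod.inr ≫ i) ≫ r = 𝟙 B := pushout.inl_desc _ _ _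
    rw [this]; exact m.W_id B
  obtain ⟨Z, mm, qq, hmmc, hqqf, hqqw, hfac2⟩ := m.fact_cof_trivFib r
  have hmmw : m.W mm := m.two_of_three_left mm qq hqqw (by rw [hfac2]; exact hrw)
  -- first lift
  haveI := m.lift_cof_trivFib f qq hf hqqf hqqw
  have sq1 : CommSq ((coprod.inl ≫ i) ≫ pushout.inr f (coprod.inr ≫ i) ≫ mm)
      f qq (𝟙 B) := by
    constructor
    rw [Category.comp_id]
    simp only [Category.assoc]
    rw [hfac2]
    have : pushout.inr f (coprod.inr ≫ i) ≫ r = p ≫ f := pushout.inr_desc _ _ _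
    rw [this]
    simp only [← Category.assoc]
    rw [hi0p, Category.id_comp]
  -- second lift
  haveI := m.lift_trivCof_fib mm (terminal.from X) hmmc hmmw hX
  have sq2 : CommSq h₀ mm (terminal.from X) (terminal.from Z) :=
    ⟨terminal.hom_ext _ _⟩
  refine ⟨sq1.lift ≫ sq2.lift, ?_⟩
  rw [← Category.assoc, sq1.fac_left]
  simp only [Category.assoc]
  rw [sq2.fac_left]
  have : pushout.inr f (coprod.inr ≫ i) ≫ h₀ = H := pushout.inr_desc _ _ _
  rw [this]
  simpa only [Category.assoc] using e0

end StrictLift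


/-- Let `I = {Aᵢ → Xᵢ}` be a set of cofibrations with each
`Aᵢ` cofibrant such that the trivial fibrations are exactly the maps with the
right lifting property with respect to `I`. If `X` is fibrant and for every
`K ∈ {Aᵢ, Xᵢ}` the map `Ho(M)(K, X) → Ho(M)(K, 1)` is a bijection, then the
unique map `e : X → 1` is a weak equivalence. -/
theorem weakEquivalence_to_terminal_of_bijective {M : Type u} [Category.{u} M]
    [HasLimits M] [HasColimits M] (m : ModelStruct M)
    {ι : Type u} (A B : ι → M) (f : ∀ k, A k ⟶ B k)
    (hcof : ∀ k, m.Cof (f k)) (hAcof : ∀ k, m.Cofibrant (A k))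
    (hgen : ∀ {X Y : M} (p : X ⟶ Y),
      (m.Fib p ∧ m.W p) ↔ ∀ k, HasLiftingProperty (f k) p)
    (X : M) (hX : m.Fibrant X)
    (hbij : ∀ k,
      Function.Bijective (fun g : m.W.Q.obj (A k) ⟶ m.W.Q.obj X =>
        g ≫ m.W.Q.map (terminal.from X)) ∧
      Function.Bijective (fun g : m.W.Q.obj (B k) ⟶ m.W.Q.obj X =>
        g ≫ m.W.Q.map (terminal.from X))) :
    m.W (terminal.from X) := by
  have hBcof : ∀ k, m.Cofibrant (B k) := by
    intro k
    have h : initial.to (B k) = initial.to (A k) ≫ f k := initial.hom_ext _ _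
    rw [ModelStruct.Cofibrant, h]
    exact m.Cof_comp _ _ (hAcof k) (hcof k)
  have key : ∀ k, HasLiftingProperty (f k) (terminal.from X) := by
    intro k
    constructor
    intro t b sq
    have hex : ∃ l : B k ⟶ X, f k ≫ l = t := by
      have hinv := aux_F_inverts m hX
      set F := auxF m X with hF
      set G' := Localization.Construction.lift F hinv with hG'
      have hGF : ∀ {K L : M} (x : K ⟶ L), G'.map (m.W.Q.map x) = F.map x := by
        intro K L x
        rfl
      obtain ⟨g₀, hg₀⟩ := (hbij k).2.2 (m.W.Q.map (terminal.from (B k)))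
      have hg₀' : g₀ ≫ m.W.Q.map (terminal.from X) =
          m.W.Q.map (terminal.from (B k)) := hg₀
      have heq : m.W.Q.map t = m.W.Q.map (f k) ≫ g₀ := by
        apply (hbij k).1.1
        show m.W.Q.map t ≫ m.W.Q.map (terminal.from X) =
          (m.W.Q.map (f k) ≫ g₀) ≫ m.W.Q.map (terminal.from X)
        rw [← m.W.Q.map_comp, Category.assoc, hg₀', ← m.W.Q.map_comp]
        congr 1
        exact terminal.hom_ext _ _
      have heq2 := congrArg G'.map heq
      rw [G'.map_comp, hGF, hGF] at heq2
      have hun := congrArg Quiver.Hom.unop heq2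
      erw [unop_comp] at hun
      have hel := congrArg (fun φ => φ (Quot.mk _ (auxRepP m X))) hun
      obtain ⟨w, hw⟩ : ∃ w : auxRep m (B k) ⟶ X, Quot.mk (fun u v => m.RH u v) w =
        ((G'.map g₀).unop (Quot.mk (fun u v => m.RH u v) (auxRepP m X))) := Quot.exists_rep _
      have hel2 : (F.map t).unop (Quot.mk (fun u v => m.RH u v) (auxRepP m X)) =
          (F.map (f k)).unop
            ((G'.map g₀).unop (Quot.mk (fun u v => m.RH u v) (auxRepP m X))) := hel
      rw [← hw] at hel2
      have hel' : (Quot.mk (fun u v => m.RH u v) (auxLift m t ≫ auxRepP m X) :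
            HQuot m X (auxRep m (A k)))
          = Quot.mk (fun u v => m.RH u v) (auxLift m (f k) ≫ w) := hel2
      have hrh : m.RH (auxLift m t ≫ auxRepP m X) (auxLift m (f k) ≫ w) :=
        aux_hquot_exact m hX hel'
      rw [auxLift_p] at hrh
      obtain ⟨sA, hsA⟩ := aux_section m (hAcof k)
      obtain ⟨sB, hsB⟩ := aux_section m (hBcof k)
      have h1 : m.RH t (sA ≫ auxLift m (f k) ≫ w) := by
        have := aux_rh_precomp m sA hrh
        rwa [← Category.assoc, hsA, Category.id_comp] at this
      have h2 : m.LH ((f k ≫ sB) ≫ w) ((sA ≫ auxLift m (f k)) ≫ w) :=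
        aux_lh_postcomp m w (aux_lifts_lh m (hAcof k) (auxRepP m (B k))
          (auxRepP_fib _ _) (auxRepP_w _ _) (f k ≫ sB) (sA ≫ auxLift m (f k))
          (by rw [Category.assoc, hsB, Category.comp_id, Category.assoc, auxLift_p,
            ← Category.assoc, hsA, Category.id_comp]))
      have h3 : m.RH ((f k ≫ sB) ≫ w) ((sA ≫ auxLift m (f k)) ≫ w) :=
        aux_lh_to_rh m (hAcof k) h2
      rw [Category.assoc, Category.assoc] at h3
      have h4 : m.RH t (f k ≫ sB ≫ w) :=
        aux_rh_trans m hX h1 (aux_rh_symm m h3)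
      exact aux_strict_lift m hX (hAcof k) (hcof k) t (sB ≫ w) h4
    obtain ⟨l, hl⟩ := hex
    exact CommSq.HasLift.mk' ⟨l, hl, terminal.hom_ext _ _⟩
  exact ((hgen (terminal.from X)).2 key).2
end

section
/- Let M be a model category, i : A → B a cofibration with A cofibrant, X a fibrant object, f : A → X a map, and h : B → X a map such that h ∘ i is homotopic to f. Then there exists a map h' : B → X with h' ∘ i = f (strictly). In other words, for a cofibration with cofibrant domain and fibrant target, a lift that exists up to homotopy can be rectified to a strict lift. -/
open CategoryTheory CategoryTheory.Limits

universe u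
section Aux

variable {M : Type u} [Category.{u} M]

/-- Retract argument: a map with the LLP against all trivial fibrations is a cofibration. -/
lemma llp_trivFib_cof (m : ModelStruct M) {U V : M} (g : U ⟶ V)
    (hl : ∀ {X Y : M} (p : X ⟶ Y), m.Fib p → m.W p → HasLiftingProperty g p) :
    m.Cof g := by
  obtain ⟨Z, j, p, hj, hp, hpw, hfac⟩ := m.fact_cof_trivFib g
  haveI := hl p hp hpw
  have sq : CommSq j g p (𝟙 V) := ⟨by simp [hfac]⟩
  exact m.Cof_retract g j (𝟙 U) sq.lift (𝟙 U) p (by simp) sq.fac_right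
    (by simp [sq.fac_left]) (by simp [hfac]) hj

/-- Retract argument: a map with the LLP against all fibrations is a weak equivalence. -/
lemma llp_fib_w (m : ModelStruct M) {U V : M} (g : U ⟶ V)
    (hl : ∀ {X Y : M} (p : X ⟶ Y), m.Fib p → HasLiftingProperty g p) :
    m.W g := by
  obtain ⟨Z, j, p, hj, hjw, hp, hfac⟩ := m.fact_trivCof_fib g
  haveI := hl p hp
  have sq : CommSq j g p (𝟙 V) := ⟨by simp [hfac]⟩
  exact m.W_retract g j (𝟙 U) sq.lift (𝟙 U) p (by simp) sq.fac_right
    (by simp [sq.fac_left]) (by simp [hfac]) hjw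

end Aux

/-- For a cofibration `i : A → B` with `A` cofibrant and `X`
fibrant, a lift that exists up to homotopy can be rectified to a strict lift:
if `h ∘ i` is homotopic to `f`, then there is `h' : B → X` with `h' ∘ i = f`. -/
theorem rectify_homotopy_lift {M : Type u} [Category.{u} M]
    [HasLimits M] [HasColimits M] (m : ModelStruct M)
    {A B X : M} (i : A ⟶ B) (hi : m.Cof i) (hA : m.Cofibrant A)
    (hX : m.Fibrant X)
    -- a cylinder object for `A`
    (CylA : M) (i0 i1 : A ⟶ CylA) (σ : CylA ⟶ A)
    (hcyl : m.Cof (coprod.desc i0 i1)) (hσ : m.W σ)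
    (h0 : i0 ≫ σ = 𝟙 A) (h1 : i1 ≫ σ = 𝟙 A)
    (f : A ⟶ X) (h : B ⟶ X)
    -- a homotopy from `f` to `h ∘ i`
    (H : CylA ⟶ X) (hH0 : i0 ≫ H = f) (hH1 : i1 ≫ H = i ≫ h) :
    ∃ h' : B ⟶ X, i ≫ h' = f := by
  -- `coprod.inr : A ⟶ A ⊔ A` is a cofibration since `A` is cofibrant
  have hinr : m.Cof (coprod.inr : A ⟶ A ⨿ A) := by
    apply llp_trivFib_cof m
    intro X' Y' p hp hpw
    haveI := m.lift_cof_trivFib (initial.to A) p hA hp hpw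
    constructor
    intro u v sq
    have sq' : CommSq (initial.to X') (initial.to A) p (coprod.inl ≫ v) :=
      ⟨by apply initial.hom_ext⟩
    refine ⟨⟨⟨coprod.desc sq'.lift u, coprod.inr_desc _ _, ?_⟩⟩⟩
    apply coprod.hom_ext
    · exact (Category.assoc _ _ _).symm.trans ((congrArg (· ≫ p) (coprod.inl_desc _ _)).trans sq'.fac_right)
    · exact (Category.assoc _ _ _).symm.trans ((congrArg (· ≫ p) (coprod.inr_desc _ _)).trans sq.w)
  -- hence `i1` is a trivial cofibration
  have hCofi1 : m.Cof i1 := by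
    have e : i1 = coprod.inr ≫ coprod.desc i0 i1 := (coprod.inr_desc _ _).symm
    rw [e]; exact m.Cof_comp _ _ hinr hcyl
  have hWi1 : m.W i1 := by
    apply m.two_of_three_left i1 σ hσ
    rw [h1]; exact m.W_id A
  -- `pushout.inl : B ⟶ P` has the LLP against all fibrations
  have hinl : ∀ {X' Y' : M} (p : X' ⟶ Y'), m.Fib p →
      HasLiftingProperty (pushout.inl i i1) p := by
    intro X' Y' p hp
    haveI := m.lift_trivCof_fib i1 p hCofi1 hWi1 hp
    constructor
    intro u v sq
    have sq' : CommSq (i ≫ u) i1 p (pushout.inr i i1 ≫ v) :=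
      ⟨by rw [Category.assoc, sq.w, ← Category.assoc, pushout.condition, Category.assoc]⟩
    refine ⟨⟨⟨pushout.desc u sq'.lift (by rw [sq'.fac_left]), pushout.inl_desc _ _ _, ?_⟩⟩⟩
    apply pushout.hom_ext
    · exact (Category.assoc _ _ _).symm.trans ((congrArg (· ≫ p) (pushout.inl_desc _ _ _)).trans sq.w)
    · exact (Category.assoc _ _ _).symm.trans ((congrArg (· ≫ p) (pushout.inr_desc _ _ _)).trans sq'.fac_right)
  have hWinl : m.W (pushout.inl i i1) := llp_fib_w m _ (fun p hp => hinl p hp)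
  -- the retraction `ρ : P ⟶ B`
  have hcond : i ≫ 𝟙 B = i1 ≫ (σ ≫ i) := by
    rw [← Category.assoc, h1]; simp
  have hWr : m.W (pushout.desc (𝟙 B) (σ ≫ i) hcond) := by
    apply m.two_of_three_right (pushout.inl i i1) _ hWinl
    rw [pushout.inl_desc]; exact m.W_id B
  -- factor `ρ` as a cofibration `k` followed by a trivial fibration `q`
  obtain ⟨Z, k, q, hk, hq, hqw, hfac⟩ := m.fact_cof_trivFib (pushout.desc (𝟙 B) (σ ≫ i) hcond)
  have hWk : m.W k := by
    apply m.two_of_three_left k q hqw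
    rw [hfac]; exact hWr
  -- extend the glued map `G = [h, H] : P ⟶ X` over `Z` (k is a trivial cofibration, X fibrant)
  haveI := m.lift_trivCof_fib k (terminal.from X) hk hWk hX
  have sqG : CommSq (pushout.desc h H hH1.symm) k (terminal.from X) (terminal.from Z) :=
    ⟨by apply terminal.hom_ext⟩
  -- lift `i` against the trivial fibration `q`
  haveI := m.lift_cof_trivFib i q hi hq hqw
  have sqt : CommSq (i0 ≫ pushout.inr i i1 ≫ k) i q (𝟙 B) := by
    constructor
    rw [Category.comp_id, Category.assoc, Category.assoc, hfac]
    rw [pushout.inr_desc]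
    rw [← Category.assoc, h0, Category.id_comp]
  refine ⟨sqt.lift ≫ sqG.lift, ?_⟩
  rw [← Category.assoc, sqt.fac_left]
  simp only [Category.assoc, sqG.fac_left]
  rw [pushout.inr_desc, hH0]
end

section
/- Let M be a cofibrantly generated model category admitting a generating set I of cofibrations whose domains are all cofibrant. Then the homotopy category Ho(M) admits a left weakly adequate set of objects, namely the set of domains and codomains of I: an object X of Ho(M) is isomorphic to the terminal object if and only if Ho(M)(K, X) is a singleton for every K in this set. -/
open CategoryTheory CategoryTheory.Limits

universe u
set_option linter.unusedSectionVars false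
attribute [local simp] prod.lift_fst prod.lift_snd coprod.inl_desc coprod.inr_desc
attribute [local simp] prod.lift_fst_assoc prod.lift_snd_assoc coprod.inl_desc_assoc coprod.inr_desc_assoc
attribute [local simp] pullback.lift_fst pullback.lift_snd pullback.lift_fst_assoc pullback.lift_snd_assoc
namespace ModelStruct

variable {M : Type u} [Category.{u} M] [HasLimits M] [HasColimits M] (m : ModelStruct M)

/-- Fibrancy is inherited along fibrations. -/
lemma fib_comp_from {E Y : M} (q : E ⟶ Y) (hq : m.Fib q)
    (hY : m.Fib (terminal.from Y)) : m.Fib (terminal.from E) := by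
  rw [show terminal.from E = q ≫ terminal.from Y from Subsingleton.elim _ _]
  exact m.Fib_comp _ _ hq hY

/-- If a morphism has the RLP against all trivial cofibrations, it is a fibration. -/
lemma fib_of_rlp {X Y : M} (p : X ⟶ Y)
    (h : ∀ {C D : M} (j : C ⟶ D), m.Cof j → m.W j → HasLiftingProperty j p) :
    m.Fib p := by
  obtain ⟨E, i, q, hic, hiw, hqf, hfac⟩ := m.fact_trivCof_fib p
  haveI := h i hic hiw
  have sq : CommSq (𝟙 X) i p q := ⟨by simp [hfac]⟩
  exact m.Fib_retract p q i (𝟙 Y) sq.lift (𝟙 Y) sq.fac_left (by simp)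
    (by simp [hfac]) (by simp [sq.fac_right]) hqf

/-- If a morphism has the RLP against all cofibrations, it is a trivial fibration. -/
lemma trivFib_of_rlp {X Y : M} (p : X ⟶ Y)
    (h : ∀ {C D : M} (j : C ⟶ D), m.Cof j → HasLiftingProperty j p) :
    m.Fib p ∧ m.W p := by
  obtain ⟨E, i, q, hic, hqf, hqw, hfac⟩ := m.fact_cof_trivFib p
  haveI := h i hic
  have sq : CommSq (𝟙 X) i p q := ⟨by simp [hfac]⟩
  constructor
  · exact m.Fib_retract p q i (𝟙 Y) sq.lift (𝟙 Y) sq.fac_left (by simp)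
      (by simp [hfac]) (by simp [sq.fac_right]) hqf
  · exact m.W_retract p q i (𝟙 Y) sq.lift (𝟙 Y) sq.fac_left (by simp)
      (by simp [hfac]) (by simp [sq.fac_right]) hqw

/-- If a morphism has the LLP against all trivial fibrations, it is a cofibration. -/
lemma cof_of_llp {X Y : M} (i : X ⟶ Y)
    (h : ∀ {E F : M} (q : E ⟶ F), m.Fib q → m.W q → HasLiftingProperty i q) :
    m.Cof i := by
  obtain ⟨E, j, q, hjc, hqf, hqw, hfac⟩ := m.fact_cof_trivFib i
  haveI := h q hqf hqw
  have sq : CommSq j i q (𝟙 Y) := ⟨by simp [hfac]⟩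
  exact m.Cof_retract i j (𝟙 X) sq.lift (𝟙 X) q (by simp) sq.fac_right
    (by simp [sq.fac_left]) (by simp [hfac]) hjc

/-- For fibrant `Y`, the first projection `Y ⨯ Y ⟶ Y` is a fibration. -/
lemma fib_fst {Y : M} (hY : m.Fib (terminal.from Y)) :
    m.Fib (prod.fst : Y ⨯ Y ⟶ Y) := by
  apply m.fib_of_rlp
  intro C D j hc hw
  constructor
  intro t b sq
  haveI := m.lift_trivCof_fib j (terminal.from Y) hc hw hY
  have sq2 : CommSq (t ≫ prod.snd) j (terminal.from Y) (terminal.from D) :=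
    ⟨Subsingleton.elim _ _⟩
  exact CommSq.HasLift.mk'
    { l := prod.lift b sq2.lift
      fac_left := by
        apply Limits.prod.hom_ext
        · simp [sq.w]
        · simp [sq2.fac_left]
      fac_right := by simp }

/-- For fibrant `Y`, the second projection `Y ⨯ Y ⟶ Y` is a fibration. -/
lemma fib_snd {Y : M} (hY : m.Fib (terminal.from Y)) :
    m.Fib (prod.snd : Y ⨯ Y ⟶ Y) := by
  apply m.fib_of_rlp
  intro C D j hc hw
  constructor
  intro t b sq
  haveI := m.lift_trivCof_fib j (terminal.from Y) hc hw hY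
  have sq2 : CommSq (t ≫ prod.fst) j (terminal.from Y) (terminal.from D) :=
    ⟨Subsingleton.elim _ _⟩
  exact CommSq.HasLift.mk'
    { l := prod.lift sq2.lift b
      fac_left := by
        apply Limits.prod.hom_ext
        · simp [sq2.fac_left]
        · simp [sq.w]
      fac_right := by simp }

/-- For cofibrant `A`, the coproduct inclusion `A ⟶ A ⨿ A` is a cofibration. -/
lemma cof_inl {A : M} (hA : m.Cof (initial.to A)) :
    m.Cof (coprod.inl : A ⟶ A ⨿ A) := by
  apply m.cof_of_llp
  intro E F q hqf hqw
  constructor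
  intro t b sq
  haveI := m.lift_cof_trivFib (initial.to A) q hA hqf hqw
  have sq2 : CommSq (initial.to E) (initial.to A) q (coprod.inr ≫ b) :=
    ⟨Subsingleton.elim _ _⟩
  exact CommSq.HasLift.mk'
    { l := coprod.desc t sq2.lift
      fac_left := by simp
      fac_right := by
        apply coprod.hom_ext
        · simpa using sq.w
        · simp [sq2.fac_right] }


variable {M : Type u} [Category.{u} M] [HasLimits M] [HasColimits M] (m : ModelStruct M)

/-- Data of a fibrant replacement. -/
structure FRData (Z : M) where
  R : M
  r : Z ⟶ R
  cof : m.Cof r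
  w : m.W r
  fib : m.Fib (terminal.from R)

/-- A choice of fibrant replacement for every object. -/
noncomputable def fr (Z : M) : FRData m Z :=
  Classical.choice <| by
    obtain ⟨R, r, p, hc, hw, hf, -⟩ := m.fact_trivCof_fib (terminal.from Z)
    exact ⟨⟨R, r, hc, hw, by rwa [Subsingleton.elim (terminal.from R) p]⟩⟩

/-- The commutative square used to define the lift of a morphism to fibrant
replacements. -/
lemma hatSq {Z Z' : M} (g : Z ⟶ Z') :
    CommSq (g ≫ (m.fr Z').r) (m.fr Z).r (terminal.from (m.fr Z').R)
      (terminal.from (m.fr Z).R) := ⟨Subsingleton.elim _ _⟩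

/-- A lift of a morphism to the chosen fibrant replacements. -/
noncomputable def hat {Z Z' : M} (g : Z ⟶ Z') : (m.fr Z).R ⟶ (m.fr Z').R := by
  haveI := m.lift_trivCof_fib (m.fr Z).r (terminal.from (m.fr Z').R)
    (m.fr Z).cof (m.fr Z).w (m.fr Z').fib
  exact (m.hatSq g).lift

lemma hat_comm {Z Z' : M} (g : Z ⟶ Z') :
    (m.fr Z).r ≫ m.hat g = g ≫ (m.fr Z').r := by
  haveI := m.lift_trivCof_fib (m.fr Z).r (terminal.from (m.fr Z').R)
    (m.fr Z).cof (m.fr Z).w (m.fr Z').fib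
  exact (m.hatSq g).fac_left

/-- The (weak right) homotopy relation on morphisms `A ⟶ Y`. -/
def hrel {A Y : M} (u u' : A ⟶ Y) : Prop :=
  ∃ (P : M) (ρ : Y ⟶ P) (π₀ π₁ : P ⟶ Y) (K : A ⟶ P),
    m.W ρ ∧ ρ ≫ π₀ = 𝟙 Y ∧ ρ ≫ π₁ = 𝟙 Y ∧ K ≫ π₀ = u ∧ K ≫ π₁ = u'

lemma hrel_refl {A Y : M} (u : A ⟶ Y) : m.hrel u u :=
  ⟨Y, 𝟙 Y, 𝟙 Y, 𝟙 Y, u, m.W_id Y, by simp, by simp, by simp, by simp⟩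

lemma hrel_symm {A Y : M} {u u' : A ⟶ Y} (h : m.hrel u u') : m.hrel u' u := by
  obtain ⟨P, ρ, π₀, π₁, K, h1, h2, h3, h4, h5⟩ := h
  exact ⟨P, ρ, π₁, π₀, K, h1, h3, h2, h5, h4⟩

lemma hrel_precomp {A' A Y : M} (w : A' ⟶ A) {u u' : A ⟶ Y} (h : m.hrel u u') :
    m.hrel (w ≫ u) (w ≫ u') := by
  obtain ⟨P, ρ, π₀, π₁, K, h1, h2, h3, h4, h5⟩ := h
  exact ⟨P, ρ, π₀, π₁, w ≫ K, h1, h2, h3, by simp [h4], by simp [h5]⟩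

/-- Upgrading a weak right homotopy to one via a *good* path object. -/
lemma hrel_good {A Y : M} {u u' : A ⟶ Y} (h : m.hrel u u') :
    ∃ (P : M) (ρ : Y ⟶ P) (π : P ⟶ Y ⨯ Y) (K : A ⟶ P),
      m.W ρ ∧ m.Fib π ∧ ρ ≫ π = prod.lift (𝟙 Y) (𝟙 Y) ∧
      K ≫ π ≫ prod.fst = u ∧ K ≫ π ≫ prod.snd = u' := by
  obtain ⟨P, ρ, π₀, π₁, K, h1, h2, h3, h4, h5⟩ := h
  obtain ⟨P', t, q, htc, htw, hqf, hfac⟩ := m.fact_trivCof_fib (prod.lift π₀ π₁)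
  refine ⟨P', ρ ≫ t, q, K ≫ t, m.W_comp _ _ h1 htw, hqf, ?_, ?_, ?_⟩
  · apply Limits.prod.hom_ext <;> simp [hfac, h2, h3]
  · have : t ≫ q ≫ prod.fst = π₀ := by simp [reassoc_of% hfac]
    rw [Category.assoc, this, h4]
  · have : t ≫ q ≫ prod.snd = π₁ := by simp [reassoc_of% hfac]
    rw [Category.assoc, this, h5]

/-- Rectification: a homotopy extension along a cofibration yields a strict
extension. -/
lemma rectify {A B T : M} (f : A ⟶ B) (hf : m.Cof f) (hT : m.Fib (terminal.from T))
    {a : A ⟶ T} {b : B ⟶ T} (h : m.hrel (f ≫ b) a) : ∃ l : B ⟶ T, f ≫ l = a := by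
  obtain ⟨P, ρ, π, K, h1, h2, h3, h4, h5⟩ := m.hrel_good h
  have hfib : m.Fib (π ≫ prod.fst) := m.Fib_comp _ _ h2 (m.fib_fst hT)
  have hw : m.W (π ≫ prod.fst) := by
    apply m.two_of_three_right ρ
    · exact h1
    · rw [show ρ ≫ π ≫ prod.fst = 𝟙 T by simp [reassoc_of% h3]]
      exact m.W_id T
  haveI := m.lift_cof_trivFib f (π ≫ prod.fst) hf hfib hw
  have sq : CommSq K f (π ≫ prod.fst) b := ⟨by rw [h4]⟩
  refine ⟨sq.lift ≫ π ≫ prod.snd, ?_⟩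
  rw [← Category.assoc, sq.fac_left, h5]

/-- Two lifts against a trivial cofibration with fibrant target are homotopic. -/
lemma lifts_hrel {C D T : M} (j : C ⟶ D) (hc : m.Cof j) (hw : m.W j)
    (hT : m.Fib (terminal.from T)) {l l' : D ⟶ T} (h : j ≫ l = j ≫ l') :
    m.hrel l l' := by
  obtain ⟨P, ρ, π, hρc, hρw, hπ, hfac⟩ := m.fact_trivCof_fib (prod.lift (𝟙 T) (𝟙 T))
  haveI := m.lift_trivCof_fib j π hc hw hπ
  have sq : CommSq (j ≫ l ≫ ρ) j π (prod.lift l l') := by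
    constructor
    apply Limits.prod.hom_ext
    · simp [hfac]
    · simp [hfac, h]
  refine ⟨P, ρ, π ≫ prod.fst, π ≫ prod.snd, sq.lift, hρw, ?_, ?_, ?_, ?_⟩
  · simp [reassoc_of% hfac]
  · simp [reassoc_of% hfac]
  · rw [← Category.assoc, sq.fac_right]; simp
  · rw [← Category.assoc, sq.fac_right]; simp

/-- From a right homotopy to a left homotopy via a good cylinder. -/
lemma hrel_lcyl {A Y : M} (hY : m.Fib (terminal.from Y)) {u u' : A ⟶ Y}
    (h : m.hrel u u') :
    ∃ (Z : M) (c : A ⨿ A ⟶ Z) (σ : Z ⟶ A) (H : Z ⟶ Y),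
      m.Cof c ∧ m.W σ ∧ c ≫ σ = coprod.desc (𝟙 A) (𝟙 A) ∧
      coprod.inl ≫ c ≫ H = u ∧ coprod.inr ≫ c ≫ H = u' := by
  obtain ⟨P, ρ, π, K, h1, h2, h3, h4, h5⟩ := m.hrel_good h
  have hfib : m.Fib (π ≫ prod.snd) := m.Fib_comp _ _ h2 (m.fib_snd hY)
  have hw : m.W (π ≫ prod.snd) := by
    apply m.two_of_three_right ρ (π ≫ prod.snd) h1
    rw [show ρ ≫ π ≫ prod.snd = 𝟙 Y by simp [reassoc_of% h3]]
    exact m.W_id Y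
  obtain ⟨Z, c, σ, hcc, hσf, hσw, hfold⟩ :=
    m.fact_cof_trivFib (coprod.desc (𝟙 A) (𝟙 A))
  haveI := m.lift_cof_trivFib c (π ≫ prod.snd) hcc hfib hw
  have e1 : ρ ≫ π ≫ prod.fst = 𝟙 Y := by rw [← Category.assoc, h3]; simp
  have e2 : ρ ≫ π ≫ prod.snd = 𝟙 Y := by rw [← Category.assoc, h3]; simp
  have sq : CommSq (coprod.desc K (u' ≫ ρ)) c (π ≫ prod.snd) (σ ≫ u') := by
    constructor
    apply Limits.coprod.hom_ext
    · simp [h5, reassoc_of% hfold]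
    · simp [e2, reassoc_of% hfold]
  refine ⟨Z, c, σ, sq.lift ≫ π ≫ prod.fst, hcc, hσw, hfold, ?_, ?_⟩
  · rw [show coprod.inl ≫ c ≫ sq.lift ≫ π ≫ prod.fst
        = (coprod.inl ≫ (c ≫ sq.lift)) ≫ π ≫ prod.fst from by simp, sq.fac_left]
    simpa using h4
  · rw [show coprod.inr ≫ c ≫ sq.lift ≫ π ≫ prod.fst
        = (coprod.inr ≫ (c ≫ sq.lift)) ≫ π ≫ prod.fst from by simp, sq.fac_left]
    simp [e1]

/-- From a left homotopy via a good cylinder to a right homotopy. -/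
lemma lcyl_hrel {A Y : M} (hA : m.Cof (initial.to A)) (hY : m.Fib (terminal.from Y))
    {u u' : A ⟶ Y} {Z : M} {c : A ⨿ A ⟶ Z} {σ : Z ⟶ A} {H : Z ⟶ Y}
    (hcc : m.Cof c) (hσw : m.W σ) (hfold : c ≫ σ = coprod.desc (𝟙 A) (𝟙 A))
    (h0 : coprod.inl ≫ c ≫ H = u) (h1 : coprod.inr ≫ c ≫ H = u') : m.hrel u u' := by
  have hd0c : m.Cof (coprod.inl ≫ c : A ⟶ Z) := m.Cof_comp _ _ (m.cof_inl hA) hcc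
  have hd0σ : (coprod.inl ≫ c) ≫ σ = 𝟙 A := by rw [Category.assoc, hfold]; simp
  have hd1σ : (coprod.inr ≫ c) ≫ σ = 𝟙 A := by rw [Category.assoc, hfold]; simp
  have hd0w : m.W (coprod.inl ≫ c : A ⟶ Z) := by
    apply m.two_of_three_left _ σ hσw
    rw [hd0σ]; exact m.W_id A
  obtain ⟨P, ρ, π, hρc, hρw, hπf, hdiag⟩ :=
    m.fact_trivCof_fib (prod.lift (𝟙 Y) (𝟙 Y))
  haveI := m.lift_trivCof_fib (coprod.inl ≫ c) π hd0c hd0w hπf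
  have e1 : ρ ≫ π ≫ prod.fst = 𝟙 Y := by rw [← Category.assoc, hdiag]; simp
  have e2 : ρ ≫ π ≫ prod.snd = 𝟙 Y := by rw [← Category.assoc, hdiag]; simp
  have sq : CommSq (u ≫ ρ) (coprod.inl ≫ c) π (prod.lift (σ ≫ u) H) := by
    constructor
    apply Limits.prod.hom_ext
    · simp [e1, reassoc_of% hfold]
    · simp [e2, reassoc_of% hfold, h0]
  refine ⟨P, ρ, π ≫ prod.fst, π ≫ prod.snd, (coprod.inr ≫ c) ≫ sq.lift,
    hρw, e1, e2, ?_, ?_⟩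
  · rw [Category.assoc, ← Category.assoc sq.lift, sq.fac_right]
    simp [reassoc_of% hd1σ]
  · rw [Category.assoc, ← Category.assoc sq.lift, sq.fac_right]
    simpa using h1

/-- Postcomposition preserves the homotopy relation (cofibrant source,
fibrant targets). -/
lemma hrel_post {A Y Y' : M} (hA : m.Cof (initial.to A))
    (hY : m.Fib (terminal.from Y)) (hY' : m.Fib (terminal.from Y'))
    (g : Y ⟶ Y') {u u' : A ⟶ Y} (h : m.hrel u u') :
    m.hrel (u ≫ g) (u' ≫ g) := by
  obtain ⟨Z, c, σ, H, hcc, hσw, hfold, h0, h1⟩ := m.hrel_lcyl hY h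
  exact m.lcyl_hrel hA hY' (H := H ≫ g) hcc hσw hfold
    (by rw [show coprod.inl ≫ c ≫ H ≫ g = (coprod.inl ≫ c ≫ H) ≫ g from by simp, h0])
    (by rw [show coprod.inr ≫ c ≫ H ≫ g = (coprod.inr ≫ c ≫ H) ≫ g from by simp, h1])

/-- Cancellation of a trivial fibration in the homotopy relation. -/
lemma hrel_cancel {A E Y' : M} (hA : m.Cof (initial.to A))
    (hE : m.Fib (terminal.from E)) (hY' : m.Fib (terminal.from Y'))
    {q : E ⟶ Y'} (hqf : m.Fib q) (hqw : m.W q) {u u' : A ⟶ E}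
    (h : m.hrel (u ≫ q) (u' ≫ q)) : m.hrel u u' := by
  obtain ⟨Z, c, σ, H, hcc, hσw, hfold, h0, h1⟩ := m.hrel_lcyl hY' h
  haveI := m.lift_cof_trivFib c q hcc hqf hqw
  have sq : CommSq (coprod.desc u u') c q H := by
    constructor
    apply Limits.coprod.hom_ext
    · simpa using h0.symm
    · simpa using h1.symm
  refine m.lcyl_hrel hA hE (H := sq.lift) hcc hσw hfold ?_ ?_
  · rw [sq.fac_left]; simp
  · rw [sq.fac_left]; simp

/-- Transitivity of the homotopy relation (fibrant target). -/
lemma hrel_trans {A Y : M} (hY : m.Fib (terminal.from Y)) {u u' u'' : A ⟶ Y}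
    (e : m.hrel u u') (e' : m.hrel u' u'') : m.hrel u u'' := by
  obtain ⟨P, ρ, π, K, h1, h2, h3, h4, h5⟩ := m.hrel_good e
  obtain ⟨P', ρ', π', K', g1, g2, g3, g4, g5⟩ := m.hrel_good e'
  have e1 : ρ ≫ π ≫ prod.fst = 𝟙 Y := by rw [← Category.assoc, h3]; simp
  have e2 : ρ ≫ π ≫ prod.snd = 𝟙 Y := by rw [← Category.assoc, h3]; simp
  have f1 : ρ' ≫ π' ≫ prod.fst = 𝟙 Y := by rw [← Category.assoc, g3]; simp
  have f2 : ρ' ≫ π' ≫ prod.snd = 𝟙 Y := by rw [← Category.assoc, g3]; simp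
  set π₁ : P ⟶ Y := π ≫ prod.snd with hπ₁
  set π'₀ : P' ⟶ Y := π' ≫ prod.fst with hπ'₀
  have hπ'₀f : m.Fib π'₀ := m.Fib_comp _ _ g2 (m.fib_fst hY)
  have hπ'₀w : m.W π'₀ := by
    apply m.two_of_three_right ρ' π'₀ g1
    rw [hπ'₀, f1]; exact m.W_id Y
  -- the first projection of the pullback is a trivial fibration
  have hfst : m.Fib (pullback.fst π₁ π'₀) ∧ m.W (pullback.fst π₁ π'₀) := by
    apply m.trivFib_of_rlp
    intro C D i hi
    constructor
    intro t b sq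
    haveI := m.lift_cof_trivFib i π'₀ hi hπ'₀f hπ'₀w
    have sq2 : CommSq (t ≫ pullback.snd π₁ π'₀) i π'₀ (b ≫ π₁) := by
      constructor
      rw [Category.assoc, ← pullback.condition, ← Category.assoc, sq.w,
        Category.assoc]
    exact CommSq.HasLift.mk'
      { l := pullback.lift b sq2.lift sq2.fac_right.symm
        fac_left := by
          apply pullback.hom_ext
          · simp [sq.w]
          · simp [sq2.fac_left]
        fac_right := by simp }
  refine ⟨pullback π₁ π'₀,
    pullback.lift ρ ρ' (by rw [hπ₁, hπ'₀, e2, f1]),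
    pullback.fst π₁ π'₀ ≫ π ≫ prod.fst,
    pullback.snd π₁ π'₀ ≫ π' ≫ prod.snd,
    pullback.lift K K' (by rw [hπ₁, hπ'₀, h5, g4]), ?_, ?_, ?_, ?_, ?_⟩
  · apply m.two_of_three_left _ (pullback.fst π₁ π'₀) hfst.2
    rw [pullback.lift_fst]; exact h1
  · rw [pullback.lift_fst_assoc, e1]
  · rw [pullback.lift_snd_assoc, f2]
  · rw [pullback.lift_fst_assoc, h4]
  · rw [pullback.lift_snd_assoc, g5]

/-- Extract a homotopy from an equality in the quotient. -/
lemma hrel_of_quot_eq {A T : M} (hT : m.Fib (terminal.from T)) {u u' : A ⟶ T}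
    (h : Quot.mk (fun a b : A ⟶ T => m.hrel a b) u
       = Quot.mk (fun a b : A ⟶ T => m.hrel a b) u') : m.hrel u u' := by
  have wd : ∀ x y : A ⟶ T, m.hrel x y → m.hrel u x = m.hrel u y := fun x y hxy =>
    propext ⟨fun h1 => m.hrel_trans hT h1 hxy,
             fun h1 => m.hrel_trans hT h1 (m.hrel_symm hxy)⟩
  have h2 : m.hrel u u = m.hrel u u' :=
    congrArg (Quot.lift (fun v => m.hrel u v) wd) h
  exact h2 ▸ m.hrel_refl u

/-- Ken Brown: postcomposition with a weak equivalence between fibrant objects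
is surjective up to homotopy. -/
lemma w_surj {A Y Y' : M} (hA : m.Cof (initial.to A)) (hY : m.Fib (terminal.from Y))
    (hY' : m.Fib (terminal.from Y')) {g : Y ⟶ Y'} (hg : m.W g) (v : A ⟶ Y') :
    ∃ u : A ⟶ Y, m.hrel (u ≫ g) v := by
  obtain ⟨E, j, q, hjc, hjw, hqf, hfac⟩ := m.fact_trivCof_fib g
  have hqw : m.W q := m.two_of_three_right j q hjw (by rwa [hfac])
  have hE : m.Fib (terminal.from E) := m.fib_comp_from q hqf hY'
  -- section of q at A
  haveI := m.lift_cof_trivFib (initial.to A) q hA hqf hqw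
  have sq1 : CommSq (initial.to E) (initial.to A) q v := ⟨Subsingleton.elim _ _⟩
  -- retraction of j
  haveI := m.lift_trivCof_fib j (terminal.from Y) hjc hjw hY
  have sq2 : CommSq (𝟙 Y) j (terminal.from Y) (terminal.from E) :=
    ⟨Subsingleton.elim _ _⟩
  refine ⟨sq1.lift ≫ sq2.lift, ?_⟩
  have hrj : m.hrel (sq2.lift ≫ j) (𝟙 E) :=
    m.lifts_hrel j hjc hjw hE (by rw [← Category.assoc, sq2.fac_left]; simp)
  have := m.hrel_post hA hE hY' q (m.hrel_precomp sq1.lift hrj)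
  rw [Category.comp_id, sq1.fac_right] at this
  rw [show (sq1.lift ≫ sq2.lift) ≫ g = (sq1.lift ≫ (sq2.lift ≫ j)) ≫ q from by
    rw [← hfac]; simp]
  exact this

/-- Ken Brown: postcomposition with a weak equivalence between fibrant objects
is injective up to homotopy. -/
lemma w_inj {A Y Y' : M} (hA : m.Cof (initial.to A)) (hY : m.Fib (terminal.from Y))
    (hY' : m.Fib (terminal.from Y')) {g : Y ⟶ Y'} (hg : m.W g) {u u' : A ⟶ Y}
    (h : m.hrel (u ≫ g) (u' ≫ g)) : m.hrel u u' := by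
  obtain ⟨E, j, q, hjc, hjw, hqf, hfac⟩ := m.fact_trivCof_fib g
  have hqw : m.W q := m.two_of_three_right j q hjw (by rwa [hfac])
  have hE : m.Fib (terminal.from E) := m.fib_comp_from q hqf hY'
  haveI := m.lift_trivCof_fib j (terminal.from Y) hjc hjw hY
  have sq2 : CommSq (𝟙 Y) j (terminal.from Y) (terminal.from E) :=
    ⟨Subsingleton.elim _ _⟩
  have h' : m.hrel ((u ≫ j) ≫ q) ((u' ≫ j) ≫ q) := by
    rw [Category.assoc, Category.assoc, hfac]; exact h
  have hj : m.hrel (u ≫ j) (u' ≫ j) := m.hrel_cancel hA hE hY' hqf hqw h'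
  have := m.hrel_post hA hE hY sq2.lift hj
  rw [show (u ≫ j) ≫ sq2.lift = u from by rw [Category.assoc, sq2.fac_left, Category.comp_id],
      show (u' ≫ j) ≫ sq2.lift = u' from by rw [Category.assoc, sq2.fac_left, Category.comp_id]]
    at this
  exact this

/-- The homotopy-classes-of-maps functor `Z ↦ [A, R Z]` for cofibrant `A`. -/
noncomputable def phi (A : M) (hA : m.Cof (initial.to A)) : M ⥤ Type u where
  obj Z := Quot (fun u u' : A ⟶ (m.fr Z).R => m.hrel u u')
  map {Z Z'} g := TypeCat.ofHom (Quot.lift (fun u => Quot.mk _ (u ≫ m.hat g))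
    (fun u u' h => Quot.sound
      (m.hrel_post hA (m.fr Z).fib (m.fr Z').fib (m.hat g) h)))
  map_id Z := by
    ext x
    obtain ⟨u, rfl⟩ := Quot.exists_rep x
    have : m.hrel (m.hat (𝟙 Z)) (𝟙 (m.fr Z).R) :=
      m.lifts_hrel (m.fr Z).r (m.fr Z).cof (m.fr Z).w (m.fr Z).fib
        (by rw [m.hat_comm]; simp)
    have h2 := Quot.sound (m.hrel_precomp u this)
    simpa using h2
  map_comp {Z Z' Z''} g g' := by
    ext x
    obtain ⟨u, rfl⟩ := Quot.exists_rep x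
    have : m.hrel (m.hat (g ≫ g')) (m.hat g ≫ m.hat g') :=
      m.lifts_hrel (m.fr Z).r (m.fr Z).cof (m.fr Z).w (m.fr Z'').fib
        (by rw [m.hat_comm, ← Category.assoc, m.hat_comm, Category.assoc,
          Category.assoc, m.hat_comm])
    have h2 := Quot.sound (m.hrel_precomp u this)
    show Quot.mk _ (u ≫ m.hat (g ≫ g')) = Quot.mk _ ((u ≫ m.hat g) ≫ m.hat g')
    rw [Category.assoc]
    exact h2

lemma hat_w {Z Z' : M} {g : Z ⟶ Z'} (hg : m.W g) : m.W (m.hat g) := by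
  apply m.two_of_three_right (m.fr Z).r (m.hat g) (m.fr Z).w
  rw [m.hat_comm]
  exact m.W_comp _ _ hg (m.fr Z').w

/-- The functor `phi` inverts weak equivalences. -/
lemma phi_inverts (A : M) (hA : m.Cof (initial.to A)) :
    m.W.IsInvertedBy (m.phi A hA) := by
  intro Z Z' g hg
  rw [isIso_iff_bijective]
  have hgw : m.W (m.hat g) := m.hat_w hg
  constructor
  · intro x y hxy
    obtain ⟨u, rfl⟩ := Quot.exists_rep x
    obtain ⟨u', rfl⟩ := Quot.exists_rep y
    have h1 : m.hrel (u ≫ m.hat g) (u' ≫ m.hat g) :=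
      m.hrel_of_quot_eq (m.fr Z').fib hxy
    exact Quot.sound (m.w_inj hA (m.fr Z).fib (m.fr Z').fib hgw h1)
  · intro y
    obtain ⟨v, rfl⟩ := Quot.exists_rep y
    obtain ⟨u, hu⟩ := m.w_surj hA (m.fr Z).fib (m.fr Z').fib hgw v
    exact ⟨Quot.mk _ u, Quot.sound hu⟩

/-- The induced functor on the localization. -/
noncomputable def phiHat (A : M) (hA : m.Cof (initial.to A)) :
    m.W.Localization ⥤ Type u :=
  Localization.lift (m.phi A hA) (m.phi_inverts A hA) m.W.Q

/-- Comparison isomorphism. -/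
noncomputable def phiIso (A : M) (hA : m.Cof (initial.to A)) :
    m.W.Q ⋙ m.phiHat A hA ≅ m.phi A hA :=
  Localization.fac _ _ _

lemma phi_map_factor (A : M) (hA : m.Cof (initial.to A)) {Z Z' : M} (g : Z ⟶ Z') :
    (m.phi A hA).map g =
      (m.phiIso A hA).inv.app Z ≫ (m.phiHat A hA).map (m.W.Q.map g) ≫
        (m.phiIso A hA).hom.app Z' := by
  have n := (m.phiIso A hA).inv.naturality g
  have : (m.phi A hA).map g ≫ (m.phiIso A hA).inv.app Z' ≫ (m.phiIso A hA).hom.app Z'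
      = (m.phiIso A hA).inv.app Z ≫ (m.W.Q ⋙ m.phiHat A hA).map g ≫
        (m.phiIso A hA).hom.app Z' := by
    rw [← Category.assoc, n, Category.assoc]
  simpa using this

lemma phi_map_eq (A : M) (hA : m.Cof (initial.to A)) {Z Z' : M} {g g' : Z ⟶ Z'}
    (h : m.W.Q.map g = m.W.Q.map g') :
    (m.phi A hA).map g = (m.phi A hA).map g' := by
  rw [m.phi_map_factor A hA g, m.phi_map_factor A hA g', h]

/-- Any map into the image of the terminal object in the localization is the
image of the canonical map. -/
lemma to_Q_terminal_unique {K : M} (φ : m.W.Q.obj K ⟶ m.W.Q.obj (⊤_ M)) :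
    φ = m.W.Q.map (terminal.from K) := by
  letI l1 : Localization.Lifting m.W.Q m.W m.W.Q (𝟭 _) := ⟨Functor.rightUnitor _⟩
  letI l2 : Localization.Lifting m.W.Q m.W
      ((Functor.const M).obj (m.W.Q.obj (⊤_ M)))
      ((Functor.const m.W.Localization).obj (m.W.Q.obj (⊤_ M))) :=
    ⟨NatIso.ofComponents (fun X => Iso.refl _) (by intros; simp)⟩
  let τ : m.W.Q ⟶ (Functor.const M).obj (m.W.Q.obj (⊤_ M)) :=
    { app := fun X => m.W.Q.map (terminal.from X)
      naturality := fun X Y f => by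
        dsimp
        rw [Category.comp_id, ← Functor.map_comp]
        congr 1
        exact Subsingleton.elim _ _ }
  let η := Localization.liftNatTrans m.W.Q m.W m.W.Q
    ((Functor.const M).obj (m.W.Q.obj (⊤_ M))) (𝟭 _)
    ((Functor.const m.W.Localization).obj (m.W.Q.obj (⊤_ M))) τ
  have happ : ∀ X : M, η.app (m.W.Q.obj X) = m.W.Q.map (terminal.from X) := by
    intro X
    rw [Localization.liftNatTrans_app]
    simp [Localization.Lifting.iso, τ, l1, l2]
  have nat := η.naturality φ
  simp only [Functor.id_map, Functor.const_obj_map, Category.comp_id] at nat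
  rw [happ K, happ (⊤_ M)] at nat
  rw [show terminal.from (⊤_ M) = 𝟙 (⊤_ M) from Subsingleton.elim _ _] at nat
  simpa using nat

end ModelStruct

/-- If `M` is cofibrantly generated by a set
`I = {Aᵢ → Xᵢ}` of cofibrations with cofibrant domains, then the set of domains
and codomains of `I` is left weakly adequate in `Ho(M)`: an object `X` is
isomorphic to the terminal object in `Ho(M)` if and only if `Ho(M)(K, X)` is a
singleton for every such `K`. -/
theorem homotopyCategory_left_weakly_adequate {M : Type u} [Category.{u} M]
    [HasLimits M] [HasColimits M] (m : ModelStruct M)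
    {ι : Type u} (A B : ι → M) (f : ∀ k, A k ⟶ B k)
    (hcof : ∀ k, m.Cof (f k)) (hAcof : ∀ k, m.Cofibrant (A k))
    (hgen : ∀ {X Y : M} (p : X ⟶ Y),
      (m.Fib p ∧ m.W p) ↔ ∀ k, HasLiftingProperty (f k) p) :
    ∀ X : M, Nonempty (m.W.Q.obj X ≅ m.W.Q.obj (⊤_ M)) ↔
      ∀ k, (Nonempty (m.W.Q.obj (A k) ⟶ m.W.Q.obj X) ∧
              Subsingleton (m.W.Q.obj (A k) ⟶ m.W.Q.obj X)) ∧
           (Nonempty (m.W.Q.obj (B k) ⟶ m.W.Q.obj X) ∧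
              Subsingleton (m.W.Q.obj (B k) ⟶ m.W.Q.obj X)) := by
  intro X
  constructor
  · rintro ⟨e⟩ k
    have hsub : ∀ K : M, ∀ φ ψ : m.W.Q.obj K ⟶ m.W.Q.obj X, φ = ψ := by
      intro K φ ψ
      have h1 : φ ≫ e.hom = ψ ≫ e.hom := by
        rw [m.to_Q_terminal_unique (φ ≫ e.hom), m.to_Q_terminal_unique (ψ ≫ e.hom)]
      calc φ = (φ ≫ e.hom) ≫ e.inv := by simp
        _ = (ψ ≫ e.hom) ≫ e.inv := by rw [h1]
        _ = ψ := by simp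
    exact ⟨⟨⟨m.W.Q.map (terminal.from (A k)) ≫ e.inv⟩, ⟨fun φ ψ => hsub _ φ ψ⟩⟩,
           ⟨⟨m.W.Q.map (terminal.from (B k)) ≫ e.inv⟩, ⟨fun φ ψ => hsub _ φ ψ⟩⟩⟩
  · intro h
    set RX := (m.fr X).R with hRXdef
    haveI : IsIso (m.W.Q.map (m.fr X).r) := m.W.Q_inverts _ (m.fr X).w
    let e' : m.W.Q.obj X ≅ m.W.Q.obj RX := asIso (m.W.Q.map (m.fr X).r)
    have hlift : ∀ k, HasLiftingProperty (f k) (terminal.from RX) := by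
      intro k
      constructor
      intro t b sq
      have hex : ∃ l : B k ⟶ RX, f k ≫ l = t := ?_
      · exact CommSq.HasLift.mk'
          { l := hex.choose
            fac_left := hex.choose_spec
            fac_right := Subsingleton.elim _ _ }
      have hB : m.Cof (initial.to (B k)) := by
        rw [show initial.to (B k) = initial.to (A k) ≫ f k from Subsingleton.elim _ _]
        exact m.Cof_comp _ _ (hAcof k) (hcof k)
      obtain ⟨φ0⟩ := (h k).2.1
      have z : (m.phi (B k) hB).obj RX :=
        (m.phiIso (B k) hB).hom.app RX
          ((m.phiHat (B k) hB).map (φ0 ≫ e'.hom)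
            ((m.phiIso (B k) hB).inv.app (B k) (Quot.mk _ (m.fr (B k)).r)))
      obtain ⟨v₁, -⟩ := Quot.exists_rep z
      haveI := m.lift_trivCof_fib (m.fr RX).r (terminal.from RX)
        (m.fr RX).cof (m.fr RX).w (m.fr X).fib
      have sqρ : CommSq (𝟙 RX) (m.fr RX).r (terminal.from RX)
          (terminal.from (m.fr RX).R) := ⟨Subsingleton.elim _ _⟩
      have hρ : (m.fr RX).r ≫ sqρ.lift = 𝟙 RX := sqρ.fac_left
      have hQ : m.W.Q.map t = m.W.Q.map (f k ≫ v₁ ≫ sqρ.lift) := by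
        haveI hs : Subsingleton (m.W.Q.obj (A k) ⟶ m.W.Q.obj X) := (h k).1.2
        have h2 := Subsingleton.elim (m.W.Q.map t ≫ e'.inv)
          (m.W.Q.map (f k ≫ v₁ ≫ sqρ.lift) ≫ e'.inv)
        rwa [Iso.cancel_iso_inv_right] at h2
      have hmap := m.phi_map_eq (A k) (hAcof k) hQ
      have hq2 : Quot.mk (fun a b : A k ⟶ (m.fr RX).R => m.hrel a b)
            ((m.fr (A k)).r ≫ m.hat t)
          = Quot.mk (fun a b : A k ⟶ (m.fr RX).R => m.hrel a b)
            ((m.fr (A k)).r ≫ m.hat (f k ≫ v₁ ≫ sqρ.lift)) :=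
        types_congr_hom hmap (Quot.mk _ (m.fr (A k)).r)
      rw [m.hat_comm, m.hat_comm] at hq2
      have hr := m.hrel_of_quot_eq (m.fr RX).fib hq2
      have hr' : m.hrel (f k ≫ ((v₁ ≫ sqρ.lift) ≫ (m.fr RX).r))
          (t ≫ (m.fr RX).r) := by
        rw [show f k ≫ (v₁ ≫ sqρ.lift) ≫ (m.fr RX).r
            = (f k ≫ v₁ ≫ sqρ.lift) ≫ (m.fr RX).r from by simp]
        exact m.hrel_symm hr
      obtain ⟨l₁, hl₁⟩ := m.rectify (f k) (hcof k) (m.fr RX).fib hr'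
      exact ⟨l₁ ≫ sqρ.lift, by
        rw [← Category.assoc, hl₁, Category.assoc, hρ, Category.comp_id]⟩
    have hW : m.W (terminal.from RX) := ((hgen (terminal.from RX)).mpr hlift).2
    have hWX : m.W (terminal.from X) := by
      rw [show terminal.from X = (m.fr X).r ≫ terminal.from RX from
        Subsingleton.elim _ _]
      exact m.W_comp _ _ (m.fr X).w hW
    haveI : IsIso (m.W.Q.map (terminal.from X)) := m.W.Q_inverts _ hWX
    exact ⟨asIso (m.W.Q.map (terminal.from X))⟩
end
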